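/- arXiv:2506.21773 — 8 statements merged into one kernel-verified Lean document; each statement's English description precedes it below -/
import Mathlib

section
/- Let S be a ℤ[t^±]-module. There is a bijection between the set of symmetric, translation-invariant, local Z-bilinear forms b : S × S → ℚ/ℤ and the set of ℤ[t^±]-sesquilinear Hermitian forms B : S × S → 𝒬 (Laurent polynomials over ℚ/ℤ), given by b ↦ B_b where B_b(x,y) = Σ_{m∈ℤ} b(t^m x, y) t^m, with inverse B ↦ b_B where b_B(x,y) is the coefficient of t^0 in B(x,y). Moreover b is nondegenerate if and only if B_b is nondegenerate. -/
open LaurentPolynomial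

namespace Stmt4

/-- `ℚ/ℤ`. -/
abbrev QZ := AddCircle (1 : ℚ)

/-- `𝒬`: Laurent polynomials with coefficients in `ℚ/ℤ`, encoded as finitely supported
functions `ℤ →₀ ℚ/ℤ` (the value at `m` is the coefficient of `t^m`). -/
abbrev Qlp := ℤ →₀ QZ

variable (S : Type*) [AddCommGroup S] [Module (LaurentPolynomial ℤ) S]

/-- A symmetric, translation-invariant, local `ℤ`-bilinear form `S × S → ℚ/ℤ`. -/
def GoodForm (b : S → S → QZ) : Prop :=
  (∀ x x' y : S, b (x + x') y = b x y + b x' y) ∧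
  (∀ x y y' : S, b x (y + y') = b x y + b x y') ∧
  (∀ x y : S, b x y = b y x) ∧
  (∀ (k : ℤ) (x y : S),
    b ((T k : LaurentPolynomial ℤ) • x) ((T k : LaurentPolynomial ℤ) • y) = b x y) ∧
  (∀ x y : S, ∃ ℓ : ℕ, ∀ k : ℤ, (ℓ : ℤ) ≤ |k| → b ((T k : LaurentPolynomial ℤ) • x) y = 0)

/-- A `ℤ[t^±]`-sesquilinear Hermitian form `S × S → 𝒬` (antilinear in the first variable,
linear in the second, for the involution `t ↦ t⁻¹`).  Multiplication by `t^k` on `𝒬` is the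
shift `Finsupp.mapDomain (· + k)`, and the involution on `𝒬` is `Finsupp.mapDomain (-·)`. -/
def HermForm (B : S → S → Qlp) : Prop :=
  (∀ x x' y : S, B (x + x') y = B x y + B x' y) ∧
  (∀ x y y' : S, B x (y + y') = B x y + B x y') ∧
  (∀ (k : ℤ) (x y : S),
    B ((T k : LaurentPolynomial ℤ) • x) y = Finsupp.mapDomain (· - k) (B x y)) ∧
  (∀ (k : ℤ) (x y : S),
    B x ((T k : LaurentPolynomial ℤ) • y) = Finsupp.mapDomain (· + k) (B x y)) ∧
  (∀ x y : S, B x y = Finsupp.mapDomain (fun m => -m) (B y x))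

/-- Nondegeneracy of a `ℚ/ℤ`-valued form. -/
def Nondeg (b : S → S → QZ) : Prop :=
  (∀ x : S, x ≠ 0 → ∃ y : S, b x y ≠ 0) ∧ (∀ y : S, y ≠ 0 → ∃ x : S, b x y ≠ 0)

/-- Nondegeneracy of a `𝒬`-valued form. -/
def NondegQ (B : S → S → Qlp) : Prop :=
  (∀ x : S, x ≠ 0 → ∃ y : S, B x y ≠ 0) ∧ (∀ y : S, y ≠ 0 → ∃ x : S, B x y ≠ 0)

section Aux

variable {S}

lemma mapDomain_sub_apply (k : ℤ) (g : Qlp) (m : ℤ) :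
    Finsupp.mapDomain (· - k) g m = g (m + k) := by
  have h := Finsupp.mapDomain_apply (f := fun n : ℤ => n - k)
    (fun a b h => by dsimp at h; omega) g (m + k)
  simpa using h

lemma mapDomain_add_apply (k : ℤ) (g : Qlp) (m : ℤ) :
    Finsupp.mapDomain (· + k) g m = g (m - k) := by
  have h := Finsupp.mapDomain_apply (f := fun n : ℤ => n + k)
    (fun a b h => by dsimp at h; omega) g (m - k)
  simpa using h

lemma mapDomain_neg_apply (g : Qlp) (m : ℤ) :
    Finsupp.mapDomain (fun n : ℤ => -n) g m = g (-m) := by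
  have h := Finsupp.mapDomain_apply (f := fun n : ℤ => -n)
    (fun a b h => by dsimp at h; omega) g (-m)
  simpa using h

lemma T_smul_T_smul (k m : ℤ) (x : S) :
    (T k : LaurentPolynomial ℤ) • (T m : LaurentPolynomial ℤ) • x
      = (T (k + m) : LaurentPolynomial ℤ) • x := by
  rw [smul_smul, ← T_add]

lemma T_zero_smul (x : S) : (T 0 : LaurentPolynomial ℤ) • x = x := by
  rw [T_zero, one_smul]

/-- The form `B_b` associated to a good form `b`. -/
noncomputable def toB (b : S → S → QZ) (hb : GoodForm S b) (x y : S) : Qlp :=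
  Finsupp.ofSupportFinite (fun m => b ((T m : LaurentPolynomial ℤ) • x) y) (by
    obtain ⟨ℓ, hℓ⟩ := hb.2.2.2.2 x y
    apply Set.Finite.subset (Set.finite_Ioo (-(ℓ : ℤ)) ℓ)
    intro k hk
    simp only [Function.mem_support] at hk
    by_contra h
    apply hk
    apply hℓ
    simp only [Set.mem_Ioo, not_and_or, not_lt] at h
    rcases abs_cases k with ⟨h1, _⟩ | ⟨h1, _⟩ <;> omega)

lemma toB_apply (b : S → S → QZ) (hb : GoodForm S b) (x y : S) (m : ℤ) :
    toB b hb x y m = b ((T m : LaurentPolynomial ℤ) • x) y := rfl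

lemma toB_herm (b : S → S → QZ) (hb : GoodForm S b) :
    HermForm S (fun x y => toB b hb x y) := by
  obtain ⟨hadd, hadd', hsym, htrans, _⟩ := id hb
  have key : ∀ (m : ℤ) (x y : S),
      b ((T m : LaurentPolynomial ℤ) • x) y = b x ((T (-m) : LaurentPolynomial ℤ) • y) := by
    intro m x y
    conv_rhs => rw [← htrans m, T_smul_T_smul]
    rw [add_neg_cancel, T_zero_smul]
  refine ⟨?_, ?_, ?_, ?_, ?_⟩
  · intro x x' y
    ext m
    simp only [Finsupp.coe_add, Pi.add_apply, toB_apply, smul_add, hadd]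
  · intro x y y'
    ext m
    simp only [Finsupp.coe_add, Pi.add_apply, toB_apply, hadd']
  · intro k x y
    ext m
    rw [toB_apply, mapDomain_sub_apply, toB_apply, T_smul_T_smul]
  · intro k x y
    ext m
    rw [toB_apply, mapDomain_add_apply, toB_apply,
      ← htrans (-k) ((T m : LaurentPolynomial ℤ) • x) ((T k : LaurentPolynomial ℤ) • y),
      T_smul_T_smul, T_smul_T_smul, neg_add_cancel, T_zero_smul,
      show -k + m = m - k by omega]
  · intro x y
    ext m
    rw [toB_apply, mapDomain_neg_apply, toB_apply, hsym, key, neg_neg]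

lemma fromB_good (B : S → S → Qlp) (hB : HermForm S B) :
    GoodForm S (fun x y => B x y 0) := by
  obtain ⟨hadd, hadd', hL, hR, hsym⟩ := hB
  refine ⟨?_, ?_, ?_, ?_, ?_⟩
  · intro x x' y; dsimp only; rw [hadd]; simp
  · intro x y y'; dsimp only; rw [hadd']; simp
  · intro x y
    dsimp only
    rw [hsym, mapDomain_neg_apply, neg_zero]
  · intro k x y
    dsimp only
    rw [hL, mapDomain_sub_apply, hR, mapDomain_add_apply]
    norm_num
  · intro x y
    refine ⟨((B x y).support.sup fun a => a.natAbs) + 1, fun k hk => ?_⟩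
    dsimp only
    rw [hL, mapDomain_sub_apply, zero_add]
    by_contra h
    have hmem : k ∈ (B x y).support := Finsupp.mem_support_iff.mpr h
    have hle : k.natAbs ≤ (B x y).support.sup fun a => a.natAbs :=
      Finset.le_sup hmem
    have : (k.natAbs : ℤ) = |k| := Int.abs_eq_natAbs k ▸ rfl
    omega

end Aux

/-- Let `S` be a `ℤ[t^±]`-module.  There is a bijection between the set of
symmetric, translation-invariant, local `ℤ`-bilinear forms `b : S × S → ℚ/ℤ` and the set of
`ℤ[t^±]`-sesquilinear Hermitian forms `B : S × S → 𝒬`, given by `b ↦ B_b` where the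
coefficient of `t^m` in `B_b (x, y)` is `b (t^m • x, y)`, with inverse `B ↦ b_B` where
`b_B (x, y)` is the coefficient of `t^0` in `B (x, y)`.  Moreover `b` is nondegenerate if and
only if `B_b` is nondegenerate. -/
theorem stmt4 :
    ∃ e : {b : S → S → QZ // GoodForm S b} ≃ {B : S → S → Qlp // HermForm S B},
      (∀ (b : {b : S → S → QZ // GoodForm S b}) (x y : S) (m : ℤ),
        ((e b : {B : S → S → Qlp // HermForm S B}).1 x y) m
          = b.1 ((T m : LaurentPolynomial ℤ) • x) y) ∧
      (∀ (B : {B : S → S → Qlp // HermForm S B}) (x y : S),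
        (e.symm B).1 x y = (B.1 x y) 0) ∧
      (∀ b : {b : S → S → QZ // GoodForm S b},
        Nondeg S b.1 ↔ NondegQ S (e b).1) := by
  refine ⟨{
    toFun := fun b => ⟨fun x y => toB b.1 b.2 x y, toB_herm b.1 b.2⟩
    invFun := fun B => ⟨fun x y => B.1 x y 0, fromB_good B.1 B.2⟩
    left_inv := by
      rintro ⟨b, hb⟩
      apply Subtype.ext
      funext x y
      show toB b hb x y 0 = b x y
      rw [toB_apply, T_zero_smul]
    right_inv := by
      rintro ⟨B, hB⟩
      apply Subtype.ext
      funext x y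
      apply Finsupp.ext
      intro m
      dsimp only
      rw [toB_apply]
      show B ((T m : LaurentPolynomial ℤ) • x) y 0 = B x y m
      rw [hB.2.2.1, mapDomain_sub_apply, zero_add]
  }, ?_, ?_, ?_⟩
  · intro b x y m; rfl
  · intro B x y; rfl
  · rintro ⟨b, hb⟩
    show Nondeg S b ↔ NondegQ S (fun x y => toB b hb x y)
    constructor
    · rintro ⟨h1, h2⟩
      constructor
      · intro x hx
        obtain ⟨y, hy⟩ := h1 x hx
        refine ⟨y, fun h => hy ?_⟩
        have := DFunLike.congr_fun h 0
        rw [toB_apply, T_zero_smul] at this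
        simpa using this
      · intro y hy
        obtain ⟨x, hx⟩ := h2 y hy
        refine ⟨x, fun h => hx ?_⟩
        have := DFunLike.congr_fun h 0
        rw [toB_apply, T_zero_smul] at this
        simpa using this
    · rintro ⟨h1, h2⟩
      have key : ∀ (m : ℤ) (x y : S),
          b ((T m : LaurentPolynomial ℤ) • x) y = b x ((T (-m) : LaurentPolynomial ℤ) • y) := by
        intro m x y
        conv_rhs => rw [← hb.2.2.2.1 m, T_smul_T_smul]
        rw [add_neg_cancel, T_zero_smul]
      constructor
      · intro x hx
        obtain ⟨y, hy⟩ := h1 x hx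
        obtain ⟨m, hm⟩ : ∃ m, toB b hb x y m ≠ 0 := by
          by_contra h
          push_neg at h
          exact hy (Finsupp.ext fun a => h a)
        rw [toB_apply, key] at hm
        exact ⟨_, hm⟩
      · intro y hy
        obtain ⟨x, hx⟩ := h2 y hy
        obtain ⟨m, hm⟩ : ∃ m, toB b hb x y m ≠ 0 := by
          by_contra h
          push_neg at h
          exact hx (Finsupp.ext fun a => h a)
        rw [toB_apply] at hm
        exact ⟨_, hm⟩

end Stmt4
end

section
/- Let (S,θ) be a finite-order theory of excitations with compactified quadratic form θ_N : S_N → ℚ/ℤ defined by θ_N(ρ(x)) = θ(x) + Σ_{m>0} b(x, t^{mN} x). Then θ_N is well-defined (independent of representative x of the class ρ(x) ∈ S_N = S/(1−t^N)S), is a translation-invariant quadratic form, and its associated bilinear form is b_N(ρ(x),ρ(y)) = Σ_{m∈ℤ} b(t^{mN} x, y). -/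
open LaurentPolynomial

namespace Stmt6

/-- `ℚ/ℤ`. -/
abbrev QZ := AddCircle (1 : ℚ)

/-- `𝒵 = ℤ[t^±]`. -/
abbrev Zl := LaurentPolynomial ℤ

/-- The submodule `I_N S = (1 - t^N) S` of a `ℤ[t^±]`-module `S`. -/
noncomputable def IN (S : Type*) [AddCommGroup S] [Module Zl S] (N : ℕ) : Submodule Zl S :=
  LinearMap.range (((1 : Zl) - T (N : ℤ)) • (LinearMap.id : S →ₗ[Zl] S))

lemma sum_Icc_split {M : Type*} [AddCommGroup M] (h : ℤ → M) (L : ℕ) :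
    ∑ m ∈ Finset.Icc (-(L:ℤ)) (L:ℤ), h m
      = h 0 + ∑ m ∈ Finset.range L, (h ((m:ℤ)+1) + h (-(m:ℤ)-1)) := by
  induction L with
  | zero => simp
  | succ L ih =>
      have h1 : (Finset.Icc (-((L:ℤ)+1)) ((L:ℤ)+1))
          = insert (-((L:ℤ)+1)) (insert ((L:ℤ)+1) (Finset.Icc (-(L:ℤ)) (L:ℤ))) := by
        ext m; simp only [Finset.mem_Icc, Finset.mem_insert]; omega
      push_cast
      rw [h1, Finset.sum_insert (by simp only [Finset.mem_insert, Finset.mem_Icc]; omega),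
        Finset.sum_insert (by simp only [Finset.mem_Icc]; omega), ih, Finset.sum_range_succ,
        show -((L:ℤ)+1) = -(L:ℤ)-1 by ring]
      abel

lemma finsum_nat_eq_range {M : Type*} [AddCommMonoid M] (f : ℕ → M) (L : ℕ)
    (h : ∀ m, L ≤ m → f m = 0) : ∑ᶠ m, f m = ∑ m ∈ Finset.range L, f m :=
  finsum_eq_finset_sum_of_support_subset f (by
    intro m hm
    simp only [Function.mem_support] at hm
    simp only [Finset.coe_range, Set.mem_Iio]
    by_contra hc
    exact hm (h m (le_of_not_gt hc)))

lemma finsum_int_split {M : Type*} [AddCommGroup M] (h : ℤ → M) (L : ℕ)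
    (hs : ∀ m : ℤ, (L:ℤ) ≤ |m| → h m = 0) :
    ∑ᶠ m : ℤ, h m = h 0 + ∑ᶠ m : ℕ, (h ((m:ℤ)+1) + h (-(m:ℤ)-1)) := by
  rw [finsum_eq_finset_sum_of_support_subset h (s := Finset.Icc (-(L:ℤ)) (L:ℤ)) ?_,
    sum_Icc_split, finsum_nat_eq_range _ L ?_]
  · intro m hm
    rw [hs ((m:ℤ)+1) (by rw [le_abs]; omega), hs (-(m:ℤ)-1) (by rw [le_abs]; omega), add_zero]
  · intro m hm
    simp only [Function.mem_support] at hm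
    simp only [Finset.coe_Icc, Set.mem_Icc]
    constructor <;> by_contra hc <;> exact hm (hs m (by rw [le_abs]; omega))

lemma telescope_sub {M : Type*} [AddCommGroup M] (f : ℕ → M) (L : ℕ) :
    ∑ m ∈ Finset.range L, (f (m+1) - f (m+2)) = f 1 - f (L+1) := by
  induction L with
  | zero => simp
  | succ L ih =>
      rw [Finset.sum_range_succ, ih, show L+1+1 = L+2 by omega]
      abel

/-- Let `(S, θ)` be a finite-order theory of excitations (`S` a finitely
generated `ℤ[t^±]`-module of finite exponent, `θ` a translation-invariant local quadratic
form with associated bilinear form `b`).  Then the formula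
`θ_N (ρ x) = θ x + Σ_{m > 0} b (x, t^{mN} x)` gives a well-defined function on
`S_N = S / (1 - t^N) S` (independent of the representative `x`), which is a
translation-invariant quadratic form whose associated bilinear form is
`b_N (ρ x, ρ y) = Σ_{m ∈ ℤ} b (t^{mN} x, y)`. -/
theorem stmt6 (S : Type*) [AddCommGroup S] [Module Zl S] [Module.Finite Zl S]
    (n : ℕ) (hn : 0 < n) (hexp : ∀ x : S, n • x = 0)
    (θ : S → QZ) (b : S → S → QZ) (hbdef : ∀ x y : S, b x y = θ (x + y) - θ x - θ y)
    (hbl : ∀ x x' y : S, b (x + x') y = b x y + b x' y)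
    (hquad : ∀ x : S, b x x = (2 : ℤ) • θ x)
    (hTI : ∀ x : S, θ ((T 1 : Zl) • x) = θ x)
    (hloc : ∀ x y : S, ∃ ℓ : ℕ, ∀ k : ℤ, (ℓ : ℤ) ≤ |k| → b ((T k : Zl) • x) y = 0)
    (N : ℕ) (hN : 0 < N) :
    ∃ θN : (S ⧸ IN S N) → QZ,
      -- `θ_N` is well defined by the stated formula on classes `ρ x`:
      (∀ x : S, θN (Submodule.Quotient.mk x)
          = θ x + ∑ᶠ m : ℕ, b x ((T (((m : ℤ) + 1) * (N : ℤ)) : Zl) • x)) ∧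
      -- and is the unique such function:
      (∀ θN' : (S ⧸ IN S N) → QZ,
        (∀ x : S, θN' (Submodule.Quotient.mk x)
          = θ x + ∑ᶠ m : ℕ, b x ((T (((m : ℤ) + 1) * (N : ℤ)) : Zl) • x)) → θN' = θN) ∧
      -- `θ_N` is translation-invariant:
      (∀ z : S ⧸ IN S N, θN ((T 1 : Zl) • z) = θN z) ∧
      -- `θ_N` is a quadratic form: its associated form is `ℤ`-bilinear ...
      (∀ z w w' : S ⧸ IN S N,
        θN (z + (w + w')) - θN z - θN (w + w')
          = (θN (z + w) - θN z - θN w) + (θN (z + w') - θN z - θN w')) ∧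
      (∀ z w w' : S ⧸ IN S N,
        θN ((z + w) + w') - θN (z + w) - θN w'
          = (θN (z + w') - θN z - θN w') + (θN (w + w') - θN w - θN w')) ∧
      -- ... and satisfies `b_N (z, z) = 2 θ_N z`:
      (∀ z : S ⧸ IN S N, θN (z + z) - θN z - θN z = (2 : ℤ) • θN z) ∧
      -- the associated bilinear form of `θ_N` is the compactified form `b_N`:
      (∀ x y : S,
        θN (Submodule.Quotient.mk x + Submodule.Quotient.mk y)
            - θN (Submodule.Quotient.mk x) - θN (Submodule.Quotient.mk y)
          = ∑ᶠ m : ℤ, b ((T (m * (N : ℤ)) : Zl) • x) y) := by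
  have hcpos : (1:ℤ) ≤ (N:ℤ) := by exact_mod_cast hN
  have hTT : ∀ (a c : ℤ) (x : S), (T a : LaurentPolynomial ℤ) • (T c : LaurentPolynomial ℤ) • x
      = (T (a+c) : LaurentPolynomial ℤ) • x := by
    intro a c x; rw [smul_smul, ← T_add]
  have hT0 : ∀ x : S, (T 0 : LaurentPolynomial ℤ) • x = x := by
    intro x; rw [T_zero, one_smul]
  have hb0l : ∀ y : S, b 0 y = 0 := by
    intro y; have h1 := hbl 0 0 y; rw [add_zero] at h1
    exact add_eq_right.mp h1.symm
  have hθ0 : θ 0 = 0 := by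
    have h1 := hbdef 0 0; rw [add_zero, hb0l, sub_self, zero_sub] at h1
    exact neg_eq_zero.mp h1.symm
  have hbsymm : ∀ x y : S, b x y = b y x := by
    intro x y; rw [hbdef, hbdef, add_comm x y]; abel
  have hbr : ∀ x y y' : S, b x (y + y') = b x y + b x y' := by
    intro x y y'; rw [hbsymm x (y+y'), hbl, hbsymm y x, hbsymm y' x]
  have hbnegr : ∀ x y : S, b x (-y) = - b x y := by
    intro x y
    have h1 := hbr x y (-y)
    rw [add_neg_cancel, hbsymm, hb0l] at h1
    exact (eq_neg_of_add_eq_zero_right h1.symm)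
  have hbnegl : ∀ x y : S, b (-x) y = - b x y := by
    intro x y; rw [hbsymm, hbnegr, hbsymm]
  have hθT : ∀ (k : ℤ) (x : S), θ ((T k : LaurentPolynomial ℤ) • x) = θ x := by
    intro k x
    induction k using Int.induction_on with
    | zero => rw [hT0]
    | succ i ih => rw [show ((i:ℤ)+1) = 1 + (i:ℤ) by ring, ← hTT, hTI, ih]
    | pred i ih =>
        have h1 := hTI ((T (-(i:ℤ)-1) : LaurentPolynomial ℤ) • x)
        rw [hTT, show (1 + (-(i:ℤ)-1)) = -(i:ℤ) by ring] at h1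
        rw [← h1, ih]
  have hbT : ∀ (k:ℤ) (x y : S), b ((T k : LaurentPolynomial ℤ) • x) ((T k : LaurentPolynomial ℤ) • y) = b x y := by
    intro k x y; rw [hbdef, hbdef, ← smul_add, hθT, hθT, hθT]
  have hbshift : ∀ (k:ℤ) (x y : S), b ((T k : LaurentPolynomial ℤ) • x) y
      = b x ((T (-k) : LaurentPolynomial ℤ) • y) := by
    intro k x y
    have h1 := hbT (-k) ((T k : LaurentPolynomial ℤ) • x) y
    rw [hTT, show (-k + k) = 0 by ring, hT0] at h1
    exact h1.symm
  have hθadd : ∀ x y : S, θ (x + y) = θ x + θ y + b x y := by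
    intro x y; rw [hbdef]; abel
  have hθneg : ∀ x : S, θ (-x) = θ x := by
    intro x
    have h1 := hθadd x (-x)
    rw [add_neg_cancel, hθ0, hbnegr, hquad, two_zsmul] at h1
    apply eq_of_sub_eq_zero
    calc θ (-x) - θ x = θ x + θ (-x) + -(θ x + θ x) := by abel
      _ = 0 := h1.symm
  have hbound2 : ∀ x y : S, ∃ L : ℕ, ∀ m : ℤ, (L:ℤ) ≤ |m| →
      b x ((T (m * (N:ℤ)) : LaurentPolynomial ℤ) • y) = 0 := by
    intro x y
    obtain ⟨ℓ, hℓ⟩ := hloc y x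
    refine ⟨ℓ, fun m hm => ?_⟩
    rw [hbsymm]
    apply hℓ
    calc (ℓ:ℤ) ≤ |m| := hm
      _ ≤ |m| * (N:ℤ) := le_mul_of_one_le_right (abs_nonneg m) hcpos
      _ = |m * (N:ℤ)| := by rw [abs_mul, abs_of_nonneg (by positivity : (0:ℤ) ≤ (N:ℤ))]
  have hbound1 : ∀ x y : S, ∃ L : ℕ, ∀ m : ℤ, (L:ℤ) ≤ |m| →
      b ((T (m * (N:ℤ)) : LaurentPolynomial ℤ) • x) y = 0 := by
    intro x y
    obtain ⟨ℓ, hℓ⟩ := hloc x y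
    refine ⟨ℓ, fun m hm => ?_⟩
    apply hℓ
    calc (ℓ:ℤ) ≤ |m| := hm
      _ ≤ |m| * (N:ℤ) := le_mul_of_one_le_right (abs_nonneg m) hcpos
      _ = |m * (N:ℤ)| := by rw [abs_mul, abs_of_nonneg (by positivity : (0:ℤ) ≤ (N:ℤ))]
  set F : S → AddCircle (1:ℚ) :=
    fun x => θ x + ∑ᶠ m : ℕ, b x ((T (((m:ℤ)+1) * (N:ℤ)) : LaurentPolynomial ℤ) • x) with hF
  have key : ∀ x s : S, F (x + ((1 : LaurentPolynomial ℤ) - T (N:ℤ)) • s) = F x := by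
    intro x s
    obtain ⟨L1, hL1⟩ := hbound2 x x
    obtain ⟨L2, hL2⟩ := hbound2 x s
    obtain ⟨L3, hL3⟩ := hbound2 s x
    obtain ⟨L4, hL4⟩ := hbound2 s s
    set L := max (max L1 L2) (max L3 L4) with hLdef
    have hL1L : L1 ≤ L := le_trans (le_max_left _ _) (le_max_left _ _)
    have hL2L : L2 ≤ L := le_trans (le_max_right _ _) (le_max_left _ _)
    have hL3L : L3 ≤ L := le_trans (le_max_left _ _) (le_max_right _ _)
    have hL4L : L4 ≤ L := le_trans (le_max_right _ _) (le_max_right _ _)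
    set P : ℕ → AddCircle (1:ℚ) :=
      fun m => b x ((T ((m:ℤ) * (N:ℤ)) : LaurentPolynomial ℤ) • s) with hP
    set Q : ℕ → AddCircle (1:ℚ) :=
      fun m => b s ((T ((m:ℤ) * (N:ℤ)) : LaurentPolynomial ℤ) • x) with hQ
    set R : ℕ → AddCircle (1:ℚ) :=
      fun m => b s ((T ((m:ℤ) * (N:ℤ)) : LaurentPolynomial ℤ) • s) with hR
    set A : ℕ → AddCircle (1:ℚ) :=
      fun m => b x ((T ((m:ℤ) * (N:ℤ)) : LaurentPolynomial ℤ) • x) with hA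
    have hPz : ∀ m : ℕ, L ≤ m → P m = 0 := by
      intro m hm; simp only [hP]; exact hL2 _ (by rw [le_abs]; left; omega)
    have hQz : ∀ m : ℕ, L ≤ m → Q m = 0 := by
      intro m hm; simp only [hQ]; exact hL3 _ (by rw [le_abs]; left; omega)
    have hRz : ∀ m : ℕ, L ≤ m → R m = 0 := by
      intro m hm; simp only [hR]; exact hL4 _ (by rw [le_abs]; left; omega)
    have hAz : ∀ m : ℕ, L ≤ m → A m = 0 := by
      intro m hm; simp only [hA]; exact hL1 _ (by rw [le_abs]; left; omega)
    have hAc : ∀ m : ℕ, b x ((T (((m:ℤ)+1) * (N:ℤ)) : LaurentPolynomial ℤ) • x) = A (m+1) := by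
      intro m; simp only [hA]; push_cast; rfl
    have hsum_x : ∑ᶠ m : ℕ, b x ((T (((m:ℤ)+1) * (N:ℤ)) : LaurentPolynomial ℤ) • x)
        = ∑ m ∈ Finset.range L, A (m+1) := by
      rw [finsum_nat_eq_range _ L (fun m hm => hL1 ((m:ℤ)+1) (by rw [le_abs]; left; omega))]
      exact Finset.sum_congr rfl (fun m _ => hAc m)
    have hptw : ∀ m : ℕ,
        b (x + (s + -((T (N:ℤ) : LaurentPolynomial ℤ) • s)))
          ((T (((m:ℤ)+1) * (N:ℤ)) : LaurentPolynomial ℤ)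
            • (x + (s + -((T (N:ℤ) : LaurentPolynomial ℤ) • s))))
        = A (m+1) + ((P (m+1) - P (m+2)) + ((Q (m+1) - Q m)
            + ((R (m+1) - R (m+2)) + (R (m+1) - R m)))) := by
      intro m
      rw [smul_add, smul_add, smul_neg, hTT]
      simp only [hbl, hbr, hbnegl, hbnegr]
      simp only [hbshift (N:ℤ) s]
      simp only [hTT]
      simp only [hP, hQ, hR, hA]
      push_cast
      rw [show ((m:ℤ)+1)*(N:ℤ) + (N:ℤ) = ((m:ℤ)+2)*(N:ℤ) by ring,
        show -(N:ℤ) + ((m:ℤ)+1)*(N:ℤ) = (m:ℤ)*(N:ℤ) by ring,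
        show -(N:ℤ) + ((m:ℤ)+2)*(N:ℤ) = ((m:ℤ)+1)*(N:ℤ) by ring]
      abel
    have hYz : ∀ m : ℕ, L ≤ m →
        b (x + (s + -((T (N:ℤ) : LaurentPolynomial ℤ) • s)))
          ((T (((m:ℤ)+1) * (N:ℤ)) : LaurentPolynomial ℤ)
            • (x + (s + -((T (N:ℤ) : LaurentPolynomial ℤ) • s)))) = 0 := by
      intro m hm
      rw [hptw m, hAz (m+1) (by omega), hPz (m+1) (by omega), hPz (m+2) (by omega),
        hQz (m+1) (by omega), hQz m hm, hRz (m+1) (by omega), hRz (m+2) (by omega), hRz m hm]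
      simp
    have hsum_y : ∑ᶠ m : ℕ,
        b (x + (s + -((T (N:ℤ) : LaurentPolynomial ℤ) • s)))
          ((T (((m:ℤ)+1) * (N:ℤ)) : LaurentPolynomial ℤ)
            • (x + (s + -((T (N:ℤ) : LaurentPolynomial ℤ) • s))))
        = ∑ m ∈ Finset.range L, A (m+1)
          + ((P 1 - P (L+1)) + ((Q L - Q 0) + ((R 1 - R (L+1)) + (R L - R 0)))) := by
      rw [finsum_nat_eq_range _ L hYz]
      rw [Finset.sum_congr rfl (fun m _ => hptw m)]
      rw [Finset.sum_add_distrib, Finset.sum_add_distrib, Finset.sum_add_distrib,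
        Finset.sum_add_distrib, telescope_sub P L, Finset.sum_range_sub Q L,
        telescope_sub R L, Finset.sum_range_sub R L]
    have hP1 : P 1 = b x ((T (N:ℤ) : LaurentPolynomial ℤ) • s) := by
      simp only [hP, Nat.cast_one, one_mul]
    have hR1 : R 1 = b s ((T (N:ℤ) : LaurentPolynomial ℤ) • s) := by
      simp only [hR, Nat.cast_one, one_mul]
    have hQ0 : Q 0 = b s x := by simp only [hQ, Nat.cast_zero, zero_mul, hT0]
    have hR0 : R 0 = θ s + θ s := by
      simp only [hR, Nat.cast_zero, zero_mul, hT0]; rw [hquad, two_zsmul]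
    simp only [hF]
    rw [sub_smul, one_smul, sub_eq_add_neg]
    rw [hsum_y, hsum_x]
    rw [hθadd x (s + -((T (N:ℤ) : LaurentPolynomial ℤ) • s)),
      hθadd s (-((T (N:ℤ) : LaurentPolynomial ℤ) • s)), hθneg, hθT, hbnegr,
      hbr x s, hbnegr]
    rw [hPz (L+1) (by omega), hQz L (by omega), hRz (L+1) (by omega), hRz L (by omega),
      hP1, hR1, hQ0, hR0, hbsymm s x]
    abel

  have Finv : ∀ x y : S, (Submodule.Quotient.mk x : S ⧸ IN S N) = Submodule.Quotient.mk y →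
      F x = F y := by
    intro x y h
    rw [Submodule.Quotient.eq] at h
    simp only [IN, LinearMap.mem_range, LinearMap.smul_apply, LinearMap.id_apply] at h
    obtain ⟨s, hs⟩ := h
    have hx : x = y + ((1 : Zl) - T (N:ℤ)) • s := by rw [hs]; abel
    rw [hx, key]
  let θN : (S ⧸ IN S N) → QZ := fun z => F (Quotient.out z)
  have hθN : ∀ x : S, θN (Submodule.Quotient.mk x) = F x := by
    intro x
    exact Finv _ x (Quotient.out_eq _)
  have hfin : ∀ x y : S, (Function.support fun m : ℤ =>
      b ((T (m*(N:ℤ)) : Zl) • x) y).Finite := by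
    intro x y
    obtain ⟨L, hL⟩ := hbound1 x y
    apply Set.Finite.subset (Set.finite_Icc (-(L:ℤ)) (L:ℤ))
    intro m hm
    simp only [Function.mem_support] at hm
    simp only [Set.mem_Icc]
    constructor <;> by_contra hc <;> exact hm (hL m (by rw [le_abs]; omega))
  have hbil : ∀ x y : S,
      θN (Submodule.Quotient.mk x + Submodule.Quotient.mk y) - θN (Submodule.Quotient.mk x)
        - θN (Submodule.Quotient.mk y)
      = ∑ᶠ m : ℤ, b ((T (m * (N:ℤ)) : Zl) • x) y := by
    intro x y
    rw [← Submodule.Quotient.mk_add, hθN, hθN, hθN]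
    obtain ⟨L1, hL1⟩ := hbound2 x x
    obtain ⟨L2, hL2⟩ := hbound2 x y
    obtain ⟨L3, hL3⟩ := hbound2 y x
    obtain ⟨L4, hL4⟩ := hbound2 y y
    obtain ⟨L5, hL5⟩ := hbound1 x y
    set L := max (max (max L1 L2) (max L3 L4)) L5 with hLdef
    have c1 : L1 ≤ L := le_trans (le_trans (le_max_left _ _) (le_max_left _ _)) (le_max_left _ _)
    have c2 : L2 ≤ L := le_trans (le_trans (le_max_right _ _) (le_max_left _ _)) (le_max_left _ _)
    have c3 : L3 ≤ L := le_trans (le_trans (le_max_left _ _) (le_max_right _ _)) (le_max_left _ _)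
    have c4 : L4 ≤ L := le_trans (le_trans (le_max_right _ _) (le_max_right _ _)) (le_max_left _ _)
    have c5 : L5 ≤ L := le_max_right _ _
    rw [finsum_int_split _ L (fun m hm => hL5 m (le_trans (by exact_mod_cast c5) hm))]
    beta_reduce
    rw [finsum_nat_eq_range _ L (fun m hm => by
      rw [hL5 ((m:ℤ)+1) (by rw [le_abs]; left; omega),
        hL5 (-(m:ℤ)-1) (by rw [le_abs]; right; omega), add_zero])]
    have expand2 : ∀ m : ℕ,
        b ((T (((m:ℤ)+1)*(N:ℤ)) : Zl) • x) y + b ((T ((-(m:ℤ)-1)*(N:ℤ)) : Zl) • x) y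
        = b y ((T (((m:ℤ)+1)*(N:ℤ)) : Zl) • x) + b x ((T (((m:ℤ)+1)*(N:ℤ)) : Zl) • y) := by
      intro m
      rw [hbsymm ((T (((m:ℤ)+1)*(N:ℤ)) : Zl) • x) y, hbshift,
        show -((-(m:ℤ)-1)*(N:ℤ)) = ((m:ℤ)+1)*(N:ℤ) by ring]
    rw [Finset.sum_congr rfl (fun m _ => expand2 m), Finset.sum_add_distrib]
    rw [show (0:ℤ)*(N:ℤ) = 0 by ring, hT0]
    simp only [hF]
    have hv1 : ∀ m : ℕ, L ≤ m →
        b (x+y) ((T (((m:ℤ)+1)*(N:ℤ)) : Zl) • (x+y)) = 0 := by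
      intro m hm
      rw [smul_add, hbr, hbl, hbl,
        hL1 ((m:ℤ)+1) (by rw [le_abs]; left; omega),
        hL3 ((m:ℤ)+1) (by rw [le_abs]; left; omega),
        hL2 ((m:ℤ)+1) (by rw [le_abs]; left; omega),
        hL4 ((m:ℤ)+1) (by rw [le_abs]; left; omega)]
      simp
    have e1 : ∑ᶠ m : ℕ, b (x+y) ((T (((m:ℤ)+1)*(N:ℤ)) : Zl) • (x+y))
        = ∑ m ∈ Finset.range L, b (x+y) ((T (((m:ℤ)+1)*(N:ℤ)) : Zl) • (x+y)) :=
      finsum_nat_eq_range _ L hv1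
    have e2 : ∑ᶠ m : ℕ, b x ((T (((m:ℤ)+1)*(N:ℤ)) : Zl) • x)
        = ∑ m ∈ Finset.range L, b x ((T (((m:ℤ)+1)*(N:ℤ)) : Zl) • x) :=
      finsum_nat_eq_range _ L (fun m hm => hL1 _ (by rw [le_abs]; left; omega))
    have e3 : ∑ᶠ m : ℕ, b y ((T (((m:ℤ)+1)*(N:ℤ)) : Zl) • y)
        = ∑ m ∈ Finset.range L, b y ((T (((m:ℤ)+1)*(N:ℤ)) : Zl) • y) :=
      finsum_nat_eq_range _ L (fun m hm => hL4 _ (by rw [le_abs]; left; omega))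
    rw [e1, e2, e3]
    have expand : ∀ m : ℕ, b (x+y) ((T (((m:ℤ)+1)*(N:ℤ)) : Zl) • (x+y))
        = (b x ((T (((m:ℤ)+1)*(N:ℤ)) : Zl) • x) + b y ((T (((m:ℤ)+1)*(N:ℤ)) : Zl) • x))
          + (b x ((T (((m:ℤ)+1)*(N:ℤ)) : Zl) • y) + b y ((T (((m:ℤ)+1)*(N:ℤ)) : Zl) • y)) := by
      intro m
      rw [smul_add, hbr, hbl, hbl]
    rw [Finset.sum_congr rfl (fun m _ => expand m), Finset.sum_add_distrib,
      Finset.sum_add_distrib, Finset.sum_add_distrib]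
    rw [hθadd x y]
    abel
  refine ⟨θN, ?_, ?_, ?_, ?_, ?_, ?_, hbil⟩
  · intro x
    exact hθN x
  · intro θN' h'
    funext z
    obtain ⟨x, rfl⟩ := Submodule.Quotient.mk_surjective _ z
    rw [h' x]
    exact (hθN x).symm
  · intro z
    obtain ⟨x, rfl⟩ := Submodule.Quotient.mk_surjective _ z
    rw [← Submodule.Quotient.mk_smul, hθN, hθN]
    simp only [hF]
    rw [hTI]
    congr 1
    apply finsum_congr
    intro m
    rw [hTT, show ((m:ℤ)+1)*(N:ℤ) + 1 = 1 + ((m:ℤ)+1)*(N:ℤ) by ring, ← hTT, hbT]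
  · intro z w w'
    obtain ⟨x, rfl⟩ := Submodule.Quotient.mk_surjective _ z
    obtain ⟨y, rfl⟩ := Submodule.Quotient.mk_surjective _ w
    obtain ⟨y', rfl⟩ := Submodule.Quotient.mk_surjective _ w'
    rw [← Submodule.Quotient.mk_add, hbil, hbil, hbil,
      ← finsum_add_distrib (hfin x y) (hfin x y')]
    apply finsum_congr
    intro m
    rw [hbr]
  · intro z w w'
    obtain ⟨x, rfl⟩ := Submodule.Quotient.mk_surjective _ z
    obtain ⟨y, rfl⟩ := Submodule.Quotient.mk_surjective _ w
    obtain ⟨y', rfl⟩ := Submodule.Quotient.mk_surjective _ w'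
    rw [← Submodule.Quotient.mk_add, hbil, hbil, hbil,
      ← finsum_add_distrib (hfin x y') (hfin y y')]
    apply finsum_congr
    intro m
    rw [smul_add, hbl]
  · intro z
    obtain ⟨x, rfl⟩ := Submodule.Quotient.mk_surjective _ z
    rw [hbil x x, hθN]
    obtain ⟨L1, hL1⟩ := hbound2 x x
    obtain ⟨L5, hL5⟩ := hbound1 x x
    set L := max L1 L5 with hLdef
    have c1 : L1 ≤ L := le_max_left _ _
    have c5 : L5 ≤ L := le_max_right _ _
    rw [finsum_int_split _ L (fun m hm => hL5 m (le_trans (by exact_mod_cast c5) hm))]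
    beta_reduce
    have expand3 : ∀ m : ℕ,
        b ((T (((m:ℤ)+1)*(N:ℤ)) : Zl) • x) x + b ((T ((-(m:ℤ)-1)*(N:ℤ)) : Zl) • x) x
        = b x ((T (((m:ℤ)+1)*(N:ℤ)) : Zl) • x) + b x ((T (((m:ℤ)+1)*(N:ℤ)) : Zl) • x) := by
      intro m
      rw [hbsymm ((T (((m:ℤ)+1)*(N:ℤ)) : Zl) • x) x, hbshift,
        show -((-(m:ℤ)-1)*(N:ℤ)) = ((m:ℤ)+1)*(N:ℤ) by ring]
    rw [finsum_congr expand3]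
    have hfa : (Function.support fun m : ℕ =>
        b x ((T (((m:ℤ)+1)*(N:ℤ)) : Zl) • x)).Finite := by
      apply Set.Finite.subset (Finset.range L).finite_toSet
      intro m hm
      simp only [Function.mem_support] at hm
      simp only [Finset.coe_range, Set.mem_Iio]
      by_contra hc
      exact hm (hL1 _ (by rw [le_abs]; left; omega))
    rw [finsum_add_distrib hfa hfa]
    rw [show (0:ℤ)*(N:ℤ) = 0 by ring, hT0, hquad, two_zsmul, two_zsmul]
    simp only [hF]
    abel

end Stmt6
end

section
/- Let p be a prime and k ∈ ℕ. The set of zero divisors in the Laurent polynomial ring ℤ_{p^k}[t,t⁻¹] is exactly the ideal (p). -/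
open LaurentPolynomial Polynomial

/-- In `ZMod (p^k)`, if `a ≠ 0` and `a * c = 0`, then `p` divides `c.val`. -/
lemma aux_dvd_val (p k : ℕ) (hp : p.Prime) (hk : 0 < k) [NeZero (p ^ k)]
    (a c : ZMod (p ^ k)) (ha : a ≠ 0) (h : a * c = 0) : p ∣ c.val := by
  by_cases hc : c = 0
  · simp [hc]
  have hav : a.val ≠ 0 := fun h0 => ha ((ZMod.val_eq_zero a).mp h0)
  have hcv : c.val ≠ 0 := fun h0 => hc ((ZMod.val_eq_zero c).mp h0)
  have hdvd : p ^ k ∣ a.val * c.val := by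
    have : ((a.val * c.val : ℕ) : ZMod (p ^ k)) = 0 := by
      push_cast [ZMod.natCast_val, ZMod.cast_id]
      exact h
    exact (ZMod.natCast_eq_zero_iff _ _).mp this
  have hk' : k ≤ (a.val * c.val).factorization p :=
    (Nat.Prime.pow_dvd_iff_le_factorization hp (Nat.mul_ne_zero hav hcv)).mp hdvd
  rw [Nat.factorization_mul hav hcv, Finsupp.add_apply] at hk'
  have hfa : a.val.factorization p < k := by
    by_contra hle
    push_neg at hle
    have : p ^ k ∣ a.val := (Nat.Prime.pow_dvd_iff_le_factorization hp hav).mpr hle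
    exact absurd (Nat.le_of_dvd (Nat.pos_of_ne_zero hav) this) (not_le.mpr (ZMod.val_lt a))
  have : 1 ≤ c.val.factorization p := by omega
  simpa using (Nat.Prime.pow_dvd_iff_le_factorization hp hcv).mpr this

/-- Let `p` be a prime and `k ≥ 1`.  The set of zero divisors in the
Laurent polynomial ring `ℤ_{p^k}[t, t⁻¹]` is exactly the ideal `(p)`. -/
theorem stmt10 (p : ℕ) (hp : p.Prime) (k : ℕ) (hk : 0 < k)
    (f : LaurentPolynomial (ZMod (p ^ k))) :
    (∃ g : LaurentPolynomial (ZMod (p ^ k)), g ≠ 0 ∧ f * g = 0) ↔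
      f ∈ Ideal.span {(p : LaurentPolynomial (ZMod (p ^ k)))} := by
  haveI : NeZero (p ^ k) := ⟨pow_ne_zero k hp.pos.ne'⟩
  have hCp : (p : LaurentPolynomial (ZMod (p ^ k))) = LaurentPolynomial.C (p : ZMod (p ^ k)) :=
    (map_natCast LaurentPolynomial.C p).symm
  constructor
  · rintro ⟨g, hg, hfg⟩
    obtain ⟨n, f', hf'⟩ := f.exists_T_pow
    obtain ⟨m, g', hg'⟩ := g.exists_T_pow
    have hmul : f' * g' = 0 := by
      rw [← Polynomial.toLaurent_eq_zero, map_mul, hf', hg', mul_mul_mul_comm, hfg, zero_mul]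
    have hg'ne : g' ≠ 0 := by
      intro h0
      apply hg
      have : g * T (m : ℤ) * T (-(m : ℤ)) = 0 := by
        rw [← hg', h0, map_zero, zero_mul]
      simpa using this
    have hf'nmem : f' ∉ nonZeroDivisors (Polynomial (ZMod (p ^ k))) := by
      intro hmem
      exact hg'ne (hmem.1 g' hmul)
    obtain ⟨a, ha, haf⟩ := Polynomial.notMem_nonZeroDivisors_iff.mp hf'nmem
    -- transfer to Laurent: C a * f = 0
    have hCaf : LaurentPolynomial.C a * f = 0 := by
      have h1 : LaurentPolynomial.C a * (f * T (n : ℤ)) = 0 := by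
        rw [← hf', ← Polynomial.toLaurent_C, ← map_mul, ← Polynomial.smul_eq_C_mul, haf,
          map_zero]
      have h2 : LaurentPolynomial.C a * f * T (n : ℤ) * T (-(n : ℤ)) = 0 := by
        rw [mul_assoc _ f _, h1, zero_mul]
      simpa using h2
    -- each coefficient of f is divisible by p
    have hcoeff : ∀ z : ℤ, p ∣ (f.coeff z).val := by
      intro z
      refine aux_dvd_val p k hp hk a (f.coeff z) ha ?_
      calc a * f.coeff z
          = ((AddMonoidAlgebra.single 0 a * f : AddMonoidAlgebra (ZMod (p ^ k)) ℤ).coeff z) :=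
            (AddMonoidAlgebra.coeff_single_zero_mul f a z).symm
        _ = ((LaurentPolynomial.C a * f : AddMonoidAlgebra (ZMod (p ^ k)) ℤ).coeff z) := rfl
        _ = 0 := by rw [hCaf]; rfl
    -- construct the quotient h
    set φ : ZMod (p ^ k) → ZMod (p ^ k) := fun x => ((x.val / p : ℕ) : ZMod (p ^ k)) with hφ
    have hφ0 : φ 0 = 0 := by simp [hφ]
    set h : LaurentPolynomial (ZMod (p ^ k)) := AddMonoidAlgebra.ofCoeff (Finsupp.mapRange φ hφ0 f.coeff) with hh
    rw [Ideal.mem_span_singleton]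
    refine ⟨h, ?_⟩
    rw [hCp]
    have : LaurentPolynomial.C (p : ZMod (p ^ k)) * h = (p : ZMod (p ^ k)) • h := by
      rw [Algebra.smul_def]; rfl
    rw [this]
    apply AddMonoidAlgebra.coeff_injective
    apply Finsupp.ext
    intro z
    rw [AddMonoidAlgebra.coeff_smul, Finsupp.smul_apply, hh, AddMonoidAlgebra.coeff_ofCoeff,
      Finsupp.mapRange_apply, hφ]
    have hdvd := hcoeff z
    have : ((p : ZMod (p ^ k)) * (((f.coeff z).val / p : ℕ) : ZMod (p ^ k))) =
        (((p * ((f.coeff z).val / p) : ℕ)) : ZMod (p ^ k)) := by push_cast; ring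
    rw [smul_eq_mul, this, Nat.mul_div_cancel' hdvd, ZMod.natCast_val, ZMod.cast_id]
  · intro hf
    obtain ⟨h, hh⟩ := Ideal.mem_span_singleton.mp hf
    refine ⟨LaurentPolynomial.C ((p : ZMod (p ^ k)) ^ (k - 1)), ?_, ?_⟩
    · intro h0
      have : ((p ^ (k - 1) : ℕ) : ZMod (p ^ k)) = 0 := by
        have h0' : (Finsupp.single 0 ((p : ZMod (p ^ k)) ^ (k - 1)) : ℤ →₀ ZMod (p ^ k)) = 0 := by
          exact congrArg AddMonoidAlgebra.coeff h0
        have := Finsupp.ext_iff.mp h0' 0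
        rw [Finsupp.single_eq_same] at this
        push_cast
        simpa using this
      have := (ZMod.natCast_eq_zero_iff _ _).mp this
      exact absurd (Nat.le_of_dvd (pow_pos hp.pos _) this)
        (not_le.mpr (Nat.pow_lt_pow_right hp.one_lt (by omega)))
    · have hpk : (p : ZMod (p ^ k)) * (p : ZMod (p ^ k)) ^ (k - 1) = 0 := by
        have : (p : ZMod (p ^ k)) * (p : ZMod (p ^ k)) ^ (k - 1) = ((p ^ k : ℕ) : ZMod (p ^ k)) := by
          push_cast
          rw [← pow_succ']
          congr 1
          omega
        rw [this, ZMod.natCast_self]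
      calc f * LaurentPolynomial.C ((p : ZMod (p ^ k)) ^ (k - 1))
          = h * (LaurentPolynomial.C (p : ZMod (p ^ k)) *
              LaurentPolynomial.C ((p : ZMod (p ^ k)) ^ (k - 1))) := by rw [hh, hCp]; ring
        _ = 0 := by rw [← map_mul, hpk, map_zero, mul_zero]
end

section
/- Let R = ℤ_{p^k}[t^±], A = R/(p) ≅ ℤ_p[t^±], and let M be a finitely generated torsion-free R-module. Then the p-torsion filtration 0 = M⁰ ⊂ M¹ ⊂ ⋯ ⊂ M^k = M, where M^s = {x ∈ M : p^s x = 0}, has all quotients M^s/M^{s−1} free as A-modules. -/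
namespace Stmt11

/-- `R = ℤ_{p^k}[t^±]`. -/
abbrev Rk (p k : ℕ) := LaurentPolynomial (ZMod (p ^ k))

/-- The `s`-th step `M^s = {x ∈ M : p^s x = 0}` of the `p`-torsion filtration. -/
noncomputable def Ms (p k : ℕ) (M : Type*) [AddCommGroup M] [Module (Rk p k) M] (s : ℕ) :
    Submodule (Rk p k) M :=
  LinearMap.ker (((p : Rk p k) ^ s) • (LinearMap.id : M →ₗ[Rk p k] M))

/-- The subquotient `M_s = M^s / M^{s-1}`. -/
abbrev Qs (p k : ℕ) (M : Type*) [AddCommGroup M] [Module (Rk p k) M] (s : ℕ) :=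
  Ms p k M s ⧸ (Submodule.comap (Ms p k M s).subtype (Ms p k M (s - 1)))





open LaurentPolynomial in
theorem aux_pid_of_isLocalization {R S : Type*} [CommRing R] [CommRing S] [Algebra R S]
    (M : Submonoid R) [IsLocalization M S] [IsPrincipalIdealRing R] :
    IsPrincipalIdealRing S := by
  constructor
  intro J
  obtain ⟨a, ha⟩ := (IsPrincipalIdealRing.principal (J.comap (algebraMap R S)))
  refine ⟨algebraMap R S a, ?_⟩
  rw [← IsLocalization.map_comap M S J, Ideal.under_def, ha, Ideal.submodule_span_eq, Ideal.map_span,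
    Set.image_singleton]

section
variable (p k : ℕ)

/-- The reduction map `ℤ_{p^k}[t^±] → ℤ_p[t^±]`. -/
noncomputable def phi (h : p ∣ p ^ k) : Rk p k →+* LaurentPolynomial (ZMod p) :=
  AddMonoidAlgebra.liftNCRingHom
    (LaurentPolynomial.C.comp (ZMod.castHom h (ZMod p)))
    (AddMonoidAlgebra.of (ZMod p) ℤ) (fun _ _ => Commute.all _ _)

theorem phi_single (h : p ∣ p ^ k) (a : ℤ) (b : ZMod (p ^ k)) :
    phi p k h (AddMonoidAlgebra.single a b) = AddMonoidAlgebra.single a (ZMod.castHom h (ZMod p) b) := by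
  classical
  show AddMonoidAlgebra.liftNC _ _ (AddMonoidAlgebra.single a b) = _
  rw [AddMonoidAlgebra.liftNC_single]
  show LaurentPolynomial.C (ZMod.castHom h (ZMod p) b) * AddMonoidAlgebra.single a 1 = _
  rw [← LaurentPolynomial.single_eq_C, AddMonoidAlgebra.single_mul_single, zero_add, mul_one]

theorem phi_apply (h : p ∣ p ^ k) (f : Rk p k) (n : ℤ) :
    (phi p k h f).coeff n = ZMod.castHom h (ZMod p) (f.coeff n) := by
  classical
  induction f using AddMonoidAlgebra.induction_linear with
  | zero => simp
  | add f g hf hg =>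
    rw [map_add, AddMonoidAlgebra.coeff_add, AddMonoidAlgebra.coeff_add, Finsupp.add_apply,
      Finsupp.add_apply, hf, hg, map_add]
  | single a b =>
    rw [phi_single, AddMonoidAlgebra.coeff_single, AddMonoidAlgebra.coeff_single,
      Finsupp.single_apply, Finsupp.single_apply]
    split_ifs <;> simp

theorem hpk0 (hp : p.Prime) (hk : 0 < k) : (p : Rk p k) ^ k = 0 := by
  have : (p : Rk p k) = LaurentPolynomial.C ((p : ℕ) : ZMod (p ^ k)) :=
    (map_natCast LaurentPolynomial.C p).symm
  rw [this, ← map_pow, ← Nat.cast_pow, ZMod.natCast_self, map_zero]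

/-- Factor out a power of `p` from a Laurent polynomial all of whose coefficients are
divisible by `p ^ m`. -/
theorem factor (hp : p.Prime) (hk : 0 < k) (m : ℕ) (f : Rk p k)
    (hf : ∀ n : ℤ, p ^ m ∣ (f.coeff n).val) :
    ∃ g : Rk p k, f = (p : Rk p k) ^ m * g := by
  haveI : NeZero (p ^ k) := ⟨pow_ne_zero k hp.pos.ne'⟩
  refine ⟨AddMonoidAlgebra.ofCoeff
    (Finsupp.mapRange (fun c : ZMod (p ^ k) => ((c.val / p ^ m : ℕ) : ZMod (p ^ k))) (by simp) f.coeff), ?_⟩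
  have hc : (p : Rk p k) ^ m
      = AddMonoidAlgebra.single (0 : ℤ) (((p ^ m : ℕ) : ZMod (p ^ k))) := by
    rw [LaurentPolynomial.single_eq_C, map_natCast, Nat.cast_pow]
  ext n
  rw [hc, AddMonoidAlgebra.coeff_single_zero_mul, AddMonoidAlgebra.coeff_ofCoeff, Finsupp.mapRange_apply,
    ← Nat.cast_mul, Nat.mul_div_cancel' (hf n), ZMod.natCast_val, ZMod.cast_id]

theorem mem_spanP_iff (hp : p.Prime) (hk : 0 < k) (f : Rk p k) :
    f ∈ Ideal.span {(p : Rk p k)} ↔ ∀ n : ℤ, p ∣ (f.coeff n).val := by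
  haveI : NeZero (p ^ k) := ⟨pow_ne_zero k hp.pos.ne'⟩
  constructor
  · intro hf n
    rw [Ideal.mem_span_singleton] at hf
    obtain ⟨g, rfl⟩ := hf
    have hc : (p : Rk p k) = AddMonoidAlgebra.single (0 : ℤ) ((p : ℕ) : ZMod (p ^ k)) := by
      rw [LaurentPolynomial.single_eq_C, map_natCast]
    rw [hc, AddMonoidAlgebra.coeff_single_zero_mul, ZMod.val_mul]
    have hppk : p ∣ p ^ k := dvd_pow_self p hk.ne'
    rw [Nat.dvd_mod_iff hppk]
    exact Dvd.dvd.mul_right (by rw [ZMod.val_natCast, Nat.dvd_mod_iff hppk]) _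
  · intro h
    obtain ⟨g, hg⟩ := factor p k hp hk 1 f (by simpa using h)
    rw [Ideal.mem_span_singleton, hg, pow_one]
    exact ⟨g, rfl⟩

theorem phi_eq_zero_iff (hp : p.Prime) (hk : 0 < k) (h : p ∣ p ^ k) (f : Rk p k) :
    phi p k h f = 0 ↔ f ∈ Ideal.span {(p : Rk p k)} := by
  haveI : NeZero (p ^ k) := ⟨pow_ne_zero k hp.pos.ne'⟩
  rw [mem_spanP_iff p k hp hk]
  constructor
  · intro h0 n
    have := congrArg (fun q : LaurentPolynomial (ZMod p) => q.coeff n) h0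
    simp only [phi_apply, AddMonoidAlgebra.coeff_zero, Finsupp.coe_zero, Pi.zero_apply] at this
    rwa [ZMod.castHom_apply, ← ZMod.natCast_val, ZMod.natCast_eq_zero_iff] at this
  · intro hdvd
    ext n
    rw [phi_apply]
    show ZMod.castHom h (ZMod p) (f.coeff n) = (0 : LaurentPolynomial (ZMod p)).coeff n
    simp only [AddMonoidAlgebra.coeff_zero, Finsupp.coe_zero, Pi.zero_apply]
    rw [ZMod.castHom_apply, ← ZMod.natCast_val, ZMod.natCast_eq_zero_iff]
    exact hdvd n

theorem phi_surjective (hp : p.Prime) (hk : 0 < k) (h : p ∣ p ^ k) :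
    Function.Surjective (phi p k h) := by
  haveI : NeZero p := ⟨hp.pos.ne'⟩
  intro g
  refine ⟨AddMonoidAlgebra.ofCoeff
    (Finsupp.mapRange (fun c : ZMod p => ((c.val : ℕ) : ZMod (p ^ k))) (by simp) g.coeff), ?_⟩
  ext n
  rw [phi_apply, AddMonoidAlgebra.coeff_ofCoeff, Finsupp.mapRange_apply, ZMod.castHom_apply, ZMod.cast_natCast h,
    ZMod.natCast_val, ZMod.cast_id]

/-- If `p^m * c = 0` in `ZMod (p^k)` with `m ≤ k` then `p^(k-m) ∣ c.val`. -/
theorem killed (hp : p.Prime) (m : ℕ) (hm : m ≤ k) (c : ZMod (p ^ k))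
    (hc : ((p : ZMod (p ^ k)) ^ m) * c = 0) : p ^ (k - m) ∣ c.val := by
  haveI : NeZero (p ^ k) := ⟨pow_ne_zero k hp.pos.ne'⟩
  have h1 : (((p ^ m * c.val : ℕ)) : ZMod (p ^ k)) = 0 := by
    push_cast
    rw [ZMod.natCast_val, ZMod.cast_id]
    exact hc
  rw [ZMod.natCast_eq_zero_iff] at h1
  have h2 : p ^ k = p ^ m * p ^ (k - m) := by
    rw [← pow_add, Nat.add_sub_cancel' hm]
  obtain ⟨d, hd⟩ := h1
  refine ⟨d, Nat.eq_of_mul_eq_mul_left (pow_pos hp.pos m) ?_⟩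
  rw [hd, h2]; ring

theorem regular (hp : p.Prime) (hk : 0 < k) (f : Rk p k)
    (hf : f ∉ Ideal.span {(p : Rk p k)}) : f ∈ nonZeroDivisors (Rk p k) := by
  haveI : NeZero (p ^ k) := ⟨pow_ne_zero k hp.pos.ne'⟩
  haveI : Fact p.Prime := ⟨hp⟩
  have h : p ∣ p ^ k := dvd_pow_self p hk.ne'
  rw [mem_nonZeroDivisors_iff_right]
  intro g hg
  have key : ∀ j : ℕ, ∃ gj : Rk p k, g = (p : Rk p k) ^ j * gj := by
    intro j
    induction j with
    | zero => exact ⟨g, by simp⟩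
    | succ j ih =>
      obtain ⟨gj, rfl⟩ := ih
      by_cases hjk : k ≤ j
      · refine ⟨gj, ?_⟩
        have h0 : (p : Rk p k) ^ j = 0 := by
          obtain ⟨d, rfl⟩ := Nat.exists_eq_add_of_le hjk
          rw [pow_add, hpk0 p k hp hk, zero_mul]
        simp [pow_succ, h0]
      push_neg at hjk
      -- from hg : p^j * gj * f = 0
      have h1 : (p : Rk p k) ^ j * (gj * f) = 0 := by
        rw [← mul_assoc]; exact hg
      have h2 : gj * f ∈ Ideal.span {(p : Rk p k)} := by
        rw [mem_spanP_iff p k hp hk]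
        intro n
        have hc : ((p : ZMod (p ^ k)) ^ j) * ((gj * f).coeff n) = 0 := by
          have hcoef : (p : Rk p k) ^ j
              = AddMonoidAlgebra.single (0 : ℤ) (((p : ZMod (p ^ k))) ^ j) := by
            rw [LaurentPolynomial.single_eq_C, map_pow, map_natCast]
          have h1' : ((p : Rk p k) ^ j * (gj * f)).coeff n = 0 := by rw [h1]; rfl
          rw [hcoef, AddMonoidAlgebra.coeff_single_zero_mul] at h1'
          exact h1'
        have := killed p k hp j hjk.le _ hc
        exact dvd_trans (dvd_pow_self p (Nat.sub_ne_zero_of_lt hjk)) this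
      -- pass to the quotient 𝔽_p[t^±]
      have h3 : phi p k h gj * phi p k h f = 0 := by
        rw [← map_mul, (phi_eq_zero_iff p k hp hk h _).mpr h2]
      have h4 : phi p k h f ≠ 0 := fun h0 => hf ((phi_eq_zero_iff p k hp hk h f).mp h0)
      have h5 : phi p k h gj = 0 := by
        rcases mul_eq_zero.mp h3 with h5 | h5
        · exact h5
        · exact absurd h5 h4
      have h6 : gj ∈ Ideal.span {(p : Rk p k)} := (phi_eq_zero_iff p k hp hk h gj).mp h5
      obtain ⟨g', hg'⟩ := Ideal.mem_span_singleton.mp h6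
      exact ⟨g', by rw [hg', pow_succ]; ring⟩
  obtain ⟨gk, hgk⟩ := key k
  rw [hgk, hpk0 p k hp hk, zero_mul]

theorem Lp_isDomain (hp : p.Prime) : IsDomain (LaurentPolynomial (ZMod p)) := by
  haveI : Fact p.Prime := ⟨hp⟩
  exact NoZeroDivisors.to_isDomain _

theorem Lp_isPID (hp : p.Prime) : IsPrincipalIdealRing (LaurentPolynomial (ZMod p)) := by
  haveI : Fact p.Prime := ⟨hp⟩
  haveI := LaurentPolynomial.isLocalization (R := ZMod p)
  exact aux_pid_of_isLocalization (Submonoid.powers (Polynomial.X : Polynomial (ZMod p)))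

theorem Rk_noeth (hp : p.Prime) : IsNoetherianRing (Rk p k) := by
  haveI : NeZero (p ^ k) := ⟨pow_ne_zero k hp.pos.ne'⟩
  haveI : IsNoetherianRing (ZMod (p ^ k)) := isNoetherian_of_finite _ _
  haveI := LaurentPolynomial.isLocalization (R := ZMod (p ^ k))
  exact IsLocalization.isNoetherianRing (Submonoid.powers (Polynomial.X : Polynomial (ZMod (p ^ k))))
    _ inferInstance

end


/-- Let `R = ℤ_{p^k}[t^±]`, `A = R/(p) ≅ ℤ_p[t^±]`, and let `M` be a
finitely generated torsion-free `R`-module.  Then the `p`-torsion filtration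
`0 = M⁰ ⊆ M¹ ⊆ ⋯ ⊆ M^k = M`, `M^s = {x : p^s x = 0}`, has all of its quotients
`M^s / M^{s-1}` free as `A`-modules (i.e. `R`-linearly isomorphic to a finite direct sum of
copies of `A = R / (p)`). -/
theorem stmt11 (p k : ℕ) (hp : p.Prime) (hk : 0 < k)
    (M : Type*) [AddCommGroup M] [Module (Rk p k) M] [Module.Finite (Rk p k) M]
    (htf : ∀ x : M, ∀ r ∈ nonZeroDivisors (Rk p k), r • x = 0 → x = 0) :
    Ms p k M 0 = ⊥ ∧ Ms p k M k = ⊤ ∧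
      ∀ s : ℕ, 1 ≤ s → s ≤ k →
        ∃ r : ℕ, Nonempty
          (Qs p k M s ≃ₗ[Rk p k] (Fin r → (Rk p k ⧸ Ideal.span {(p : Rk p k)}))) := by
  haveI : Fact p.Prime := ⟨hp⟩
  haveI : NeZero (p ^ k) := ⟨pow_ne_zero k hp.pos.ne'⟩
  have hmem : ∀ (j : ℕ) (x : M), x ∈ Ms p k M j ↔ (p : Rk p k) ^ j • x = 0 := by
    intro j x
    simp [Ms]
  refine ⟨?_, ?_, ?_⟩
  · ext x
    simp [hmem]
  · ext x
    simp [hmem, hpk0 p k hp hk]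
  · intro s hs1 hsk
    have h : p ∣ p ^ k := dvd_pow_self p hk.ne'
    have hs : s - 1 + 1 = s := Nat.sub_add_cancel hs1
    set I : Ideal (Rk p k) := Ideal.span {(p : Rk p k)} with hI
    set A := Rk p k ⧸ I with hA
    have hker : RingHom.ker (phi p k h) = I := by
      ext f; rw [RingHom.mem_ker, phi_eq_zero_iff p k hp hk h]
    let e : A ≃+* LaurentPolynomial (ZMod p) :=
      (Ideal.quotEquivOfEq hker.symm).trans
        (RingHom.quotientKerEquivOfSurjective (phi_surjective p k hp hk h))
    haveI : IsDomain (LaurentPolynomial (ZMod p)) := Lp_isDomain p hp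
    haveI : IsDomain A := MulEquiv.isDomain (LaurentPolynomial (ZMod p)) e.toMulEquiv
    haveI : IsPrincipalIdealRing A := by
      haveI := Lp_isPID p hp
      exact IsPrincipalIdealRing.of_surjective e.symm.toRingHom e.symm.surjective
    haveI : IsNoetherianRing (Rk p k) := Rk_noeth p k hp
    haveI : IsNoetherian (Rk p k) M := isNoetherian_of_isNoetherianRing_of_finite _ _
    haveI : Module.Finite (Rk p k) (Ms p k M s) :=
      Module.Finite.iff_fg.mpr (IsNoetherian.noetherian _)
    set N : Submodule (Rk p k) (Ms p k M s) :=
      Submodule.comap (Ms p k M s).subtype (Ms p k M (s - 1)) with hN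
    haveI : Module.Finite (Rk p k) (Qs p k M s) := Module.Finite.quotient _ _
    -- the quotient is p-torsion
    have htorby : Module.IsTorsionBy (Rk p k) (Qs p k M s) (p : Rk p k) := by
      intro q
      obtain ⟨x, rfl⟩ := Submodule.Quotient.mk_surjective N q
      rw [← Submodule.Quotient.mk_smul, Submodule.Quotient.mk_eq_zero]
      rw [hN, Submodule.mem_comap]
      rw [hmem]
      have hx := (hmem s x.1).mp x.2
      show (p : Rk p k) ^ (s - 1) • ((p : Rk p k) • (x : M)) = 0
      rw [smul_smul, ← pow_succ, hs]
      exact hx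
    have htor : Module.IsTorsionBySet (Rk p k) (Qs p k M s) I := by
      rw [hI, ← Ideal.submodule_span_eq]
      exact (Module.isTorsionBySet_span_singleton_iff _).mpr htorby
    letI : Module A (Qs p k M s) := htor.module
    haveI : IsScalarTower (Rk p k) A (Qs p k M s) := htor.isScalarTower
    haveI : Module.Finite A (Qs p k M s) :=
      Module.Finite.of_restrictScalars_finite (Rk p k) A _
    haveI : NoZeroSMulDivisors A (Qs p k M s) := by
      refine ⟨fun {a} {q} haq => ?_⟩
      obtain ⟨f, rfl⟩ := Ideal.Quotient.mk_surjective a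
      by_cases hf : f ∈ I
      · exact Or.inl ((Ideal.Quotient.eq_zero_iff_mem).mpr hf)
      refine Or.inr ?_
      obtain ⟨x, rfl⟩ := Submodule.Quotient.mk_surjective N q
      rw [Module.IsTorsionBySet.mk_smul htor, ← Submodule.Quotient.mk_smul] at haq
      rw [Submodule.Quotient.mk_eq_zero] at haq ⊢
      rw [hN, Submodule.mem_comap, hmem] at haq ⊢
      have h1 : f • ((p : Rk p k) ^ (s - 1) • (x : M)) = 0 := by
        have : (p : Rk p k) ^ (s - 1) • (f • (x : M)) = 0 := haq
        rwa [smul_comm] at this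
      exact htf _ f (regular p k hp hk f hf) h1
    obtain ⟨r, b⟩ := Module.basisOfFiniteTypeTorsionFree' (R := A) (M := Qs p k M s)
    exact ⟨r, ⟨b.equivFun.restrictScalars (Rk p k)⟩⟩


end Stmt11
end

section
/- Let M and N be finitely generated torsion-free modules over R = ℤ_{p^k}[t^±] with p-torsion filtrations M^s and N^s, and let f : M → N be R-linear. Then f induces well-defined R-linear maps f_s : M^s/M^{s−1} → N^s/N^{s−1}, and: (1) f is injective iff all f_s are injective; (2) if all f_s are surjective then f is surjective; (3) f is an isomorphism iff all f_s are isomorphisms. -/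
namespace Stmt12

/-- `R = ℤ_{p^k}[t^±]`. -/
abbrev Rk (p k : ℕ) := LaurentPolynomial (ZMod (p ^ k))

/-- The `s`-th step `M^s = {x ∈ M : p^s x = 0}` of the `p`-torsion filtration. -/
noncomputable def Ms (p k : ℕ) (M : Type*) [AddCommGroup M] [Module (Rk p k) M] (s : ℕ) :
    Submodule (Rk p k) M :=
  LinearMap.ker (((p : Rk p k) ^ s) • (LinearMap.id : M →ₗ[Rk p k] M))

/-- The subquotient `M_s = M^s / M^{s-1}`. -/
abbrev Qs (p k : ℕ) (M : Type*) [AddCommGroup M] [Module (Rk p k) M] (s : ℕ) :=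
  Ms p k M s ⧸ (Submodule.comap (Ms p k M s).subtype (Ms p k M (s - 1)))

lemma mem_Ms {p k : ℕ} {M : Type*} [AddCommGroup M] [Module (Rk p k) M] (s : ℕ) (x : M) :
    x ∈ Ms p k M s ↔ ((p : Rk p k) ^ s) • x = 0 := by
  simp [Ms, LinearMap.mem_ker]

lemma pk_zero (p k : ℕ) : ((p : Rk p k)) ^ k = 0 := by
  have h : ((p ^ k : ℕ) : Rk p k) = 0 := by
    rw [← map_natCast (algebraMap (ZMod (p ^ k)) (Rk p k)) (p ^ k), ZMod.natCast_self, map_zero]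
  push_cast at h
  exact h

lemma Ms_mono {p k : ℕ} {M : Type*} [AddCommGroup M] [Module (Rk p k) M] {s t : ℕ}
    (hst : s ≤ t) : Ms p k M s ≤ Ms p k M t := by
  intro x hx
  rw [mem_Ms] at hx ⊢
  obtain ⟨d, rfl⟩ := Nat.exists_eq_add_of_le hst
  rw [pow_add, mul_comm, mul_smul, hx, smul_zero]

lemma mem_Ms_k {p k : ℕ} {M : Type*} [AddCommGroup M] [Module (Rk p k) M] {s : ℕ}
    (hs : k ≤ s) (x : M) : x ∈ Ms p k M s := by
  refine Ms_mono hs ?_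
  rw [mem_Ms, pk_zero, zero_smul]

lemma mem_Ms_zero {p k : ℕ} {M : Type*} [AddCommGroup M] [Module (Rk p k) M] (x : M) :
    x ∈ Ms p k M 0 ↔ x = 0 := by
  rw [mem_Ms, pow_zero, one_smul]

/-- Let `M` and `N` be finitely generated torsion-free modules over
`R = ℤ_{p^k}[t^±]` with `p`-torsion filtrations `M^s`, `N^s`, and let `f : M → N` be
`R`-linear.  Then `f` induces well-defined `R`-linear maps
`f_s : M^s/M^{s-1} → N^s/N^{s-1}` (with `f_s [x] = [f x]`), and: (1) `f` is injective iff all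
`f_s` (for `1 ≤ s ≤ k`) are injective; (2) if all `f_s` are surjective then `f` is
surjective; (3) `f` is an isomorphism iff all `f_s` are isomorphisms. -/
theorem stmt12 (p k : ℕ) (hp : p.Prime) (hk : 0 < k)
    (M N : Type*) [AddCommGroup M] [Module (Rk p k) M] [Module.Finite (Rk p k) M]
    [AddCommGroup N] [Module (Rk p k) N] [Module.Finite (Rk p k) N]
    (htfM : ∀ x : M, ∀ r ∈ nonZeroDivisors (Rk p k), r • x = 0 → x = 0)
    (htfN : ∀ x : N, ∀ r ∈ nonZeroDivisors (Rk p k), r • x = 0 → x = 0)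
    (f : M →ₗ[Rk p k] N) :
    ∃ fs : ∀ s : ℕ, Qs p k M s →ₗ[Rk p k] Qs p k N s,
      -- the maps `f_s` are induced by `f`:
      (∀ (s : ℕ) (x : Ms p k M s) (y : Ms p k N s), (y : N) = f (x : M) →
        fs s (Submodule.Quotient.mk x) = Submodule.Quotient.mk y) ∧
      -- (1)
      (Function.Injective f ↔ ∀ s : ℕ, 1 ≤ s → s ≤ k → Function.Injective (fs s)) ∧
      -- (2)
      ((∀ s : ℕ, 1 ≤ s → s ≤ k → Function.Surjective (fs s)) → Function.Surjective f) ∧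
      -- (3)
      (Function.Bijective f ↔ ∀ s : ℕ, 1 ≤ s → s ≤ k → Function.Bijective (fs s)) := by
  classical
  have hmap : ∀ s : ℕ, ∀ x : M, x ∈ Ms p k M s → f x ∈ Ms p k N s := by
    intro s x hx
    rw [mem_Ms] at hx ⊢
    rw [← map_smul, hx, map_zero]
  set F : ∀ s : ℕ, Ms p k M s →ₗ[Rk p k] Ms p k N s :=
    fun s => f.restrict (fun x hx => hmap s x hx) with hF
  have hFcoe : ∀ s (x : Ms p k M s), ((F s x : N)) = f (x : M) := fun s x => rfl
  have hle : ∀ s, Submodule.comap (Ms p k M s).subtype (Ms p k M (s - 1)) ≤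
      Submodule.comap (F s) (Submodule.comap (Ms p k N s).subtype (Ms p k N (s - 1))) := by
    intro s x hx
    simp only [Submodule.mem_comap, Submodule.subtype_apply] at hx ⊢
    rw [hFcoe]
    exact hmap (s - 1) x hx
  set fs : ∀ s : ℕ, Qs p k M s →ₗ[Rk p k] Qs p k N s :=
    fun s => Submodule.mapQ _ _ (F s) (hle s) with hfs
  have hfsmk : ∀ (s : ℕ) (x : Ms p k M s),
      fs s (Submodule.Quotient.mk x) = Submodule.Quotient.mk (F s x) := by
    intro s x
    simp [hfs, Submodule.mapQ_apply]
  -- characterization of fs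
  have hchar : ∀ (s : ℕ) (x : Ms p k M s) (y : Ms p k N s), (y : N) = f (x : M) →
      fs s (Submodule.Quotient.mk x) = Submodule.Quotient.mk y := by
    intro s x y hy
    rw [hfsmk]
    congr 1
    exact Subtype.ext (by rw [hFcoe]; exact hy.symm)
  -- (1) forward
  have h1f : Function.Injective f → ∀ s : ℕ, 1 ≤ s → s ≤ k → Function.Injective (fs s) := by
    intro hf s _ _
    rw [injective_iff_map_eq_zero]
    intro a ha
    obtain ⟨x, rfl⟩ := Submodule.Quotient.mk_surjective _ a
    rw [hfsmk, Submodule.Quotient.mk_eq_zero] at ha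
    simp only [Submodule.mem_comap, Submodule.subtype_apply] at ha
    rw [hFcoe, mem_Ms] at ha
    rw [Submodule.Quotient.mk_eq_zero]
    simp only [Submodule.mem_comap, Submodule.subtype_apply]
    rw [mem_Ms]
    apply hf
    rw [map_smul, ha, map_zero]
  -- (1) backward
  have h1b : (∀ s : ℕ, 1 ≤ s → s ≤ k → Function.Injective (fs s)) → Function.Injective f := by
    intro h
    rw [injective_iff_map_eq_zero]
    intro x hx
    by_contra hx0
    have hPk : ∃ s, x ∈ Ms p k M s := ⟨k, mem_Ms_k le_rfl x⟩
    set s := Nat.find hPk with hs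
    have hmem : x ∈ Ms p k M s := Nat.find_spec hPk
    have hs1 : 1 ≤ s := by
      rcases Nat.eq_zero_or_pos s with h0 | h0
      · exfalso
        apply hx0
        rw [← mem_Ms_zero (p := p) (k := k), ← h0]
        exact hmem
      · exact h0
    have hsk : s ≤ k := Nat.find_le (mem_Ms_k le_rfl x)
    have hnot : x ∉ Ms p k M (s - 1) := by
      intro hmem'
      exact absurd hmem' (Nat.find_min hPk (by omega))
    have hz : fs s (Submodule.Quotient.mk ⟨x, hmem⟩) = 0 := by
      rw [hfsmk]
      rw [Submodule.Quotient.mk_eq_zero]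
      simp only [Submodule.mem_comap, Submodule.subtype_apply]
      rw [hFcoe]
      simp only [hx]
      exact (Ms p k N (s - 1)).zero_mem
    have := (injective_iff_map_eq_zero (fs s)).mp (h s hs1 hsk) _ hz
    rw [Submodule.Quotient.mk_eq_zero] at this
    exact hnot this
  -- (2)
  have h2 : (∀ s : ℕ, 1 ≤ s → s ≤ k → Function.Surjective (fs s)) → Function.Surjective f := by
    intro h
    have key : ∀ s : ℕ, ∀ y : N, y ∈ Ms p k N s → ∃ x : M, x ∈ Ms p k M s ∧ f x = y := by
      intro s
      induction s with
      | zero =>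
        intro y hy
        rw [mem_Ms_zero] at hy
        exact ⟨0, (Ms p k M 0).zero_mem, by rw [map_zero, hy]⟩
      | succ s ih =>
        intro y hy
        by_cases hsk : s + 1 ≤ k
        · obtain ⟨a, ha⟩ := h (s + 1) (Nat.le_add_left 1 s) hsk (Submodule.Quotient.mk ⟨y, hy⟩)
          obtain ⟨x, rfl⟩ := Submodule.Quotient.mk_surjective _ a
          rw [hfsmk, Submodule.Quotient.eq] at ha
          simp only [Submodule.mem_comap, Submodule.subtype_apply, Submodule.coe_sub] at ha
          rw [hFcoe] at ha
          have ha' : f (x : M) - y ∈ Ms p k N ((s + 1) - 1) := ha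
          simp only [Nat.add_sub_cancel] at ha'
          obtain ⟨x', hx'mem, hx'⟩ := ih _ ha'
          refine ⟨(x : M) - x', ?_, ?_⟩
          · exact Submodule.sub_mem _ x.2 (Ms_mono (Nat.le_succ s) hx'mem)
          · rw [map_sub, hx']
            abel
        · have := ih y (mem_Ms_k (by omega) y)
          obtain ⟨x, hx, hfx⟩ := this
          exact ⟨x, Ms_mono (Nat.le_succ s) hx, hfx⟩
    intro y
    obtain ⟨x, _, hx⟩ := key k y (mem_Ms_k le_rfl y)
    exact ⟨x, hx⟩
  -- (3) forward: bijective f → each fs surjective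
  have h3s : Function.Bijective f → ∀ s : ℕ, Function.Surjective (fs s) := by
    intro ⟨hinj, hsurj⟩ s b
    obtain ⟨y, rfl⟩ := Submodule.Quotient.mk_surjective _ b
    obtain ⟨x, hx⟩ := hsurj (y : N)
    have hxmem : x ∈ Ms p k M s := by
      rw [mem_Ms]
      apply hinj
      rw [map_smul, hx, map_zero]
      have := y.2
      rw [mem_Ms] at this
      exact this
    exact ⟨Submodule.Quotient.mk ⟨x, hxmem⟩, hchar s ⟨x, hxmem⟩ y hx.symm⟩
  refine ⟨fs, hchar, ⟨h1f, h1b⟩, h2, ?_⟩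
  constructor
  · intro hbij s hs1 hsk
    exact ⟨h1f hbij.1 s hs1 hsk, h3s hbij s⟩
  · intro h
    exact ⟨h1b (fun s a b => (h s a b).1), h2 (fun s a b => (h s a b).2)⟩

end Stmt12
end

section
/- Let ℛ be a finite nonzero commutative ring and f ∈ ℛ[t^±] a nonzero Laurent polynomial of positive relative degree whose highest and lowest degree coefficients are units in ℛ. Then there exists N₀ ∈ ℕ such that for every N divisible by N₀ there is ξ_N ∈ ℛ[t^±] with ξ_N · f = 1 − t^N; moreover the highest and lowest degree coefficients of ξ_N are units, and the relative degree of ξ_N is strictly less than N. -/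
open LaurentPolynomial

lemma toLaurent_apply_coe {R : Type*} [Semiring R] (p : Polynomial R) (n : ℕ) :
    (Polynomial.toLaurent p).coeff (n : ℤ) = p.coeff n := by
  rw [LaurentPolynomial.coeff_toLaurent]
  exact Finsupp.mapDomain_apply Nat.castEmbedding.injective _ _

lemma toLaurent_apply_neg {R : Type*} [Semiring R] (p : Polynomial R) (m : ℤ) (h : m < 0) :
    (Polynomial.toLaurent p).coeff m = 0 := by
  rw [LaurentPolynomial.coeff_toLaurent]
  apply Finsupp.mapDomain_of_notMem_range
  rintro ⟨n, rfl⟩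
  simp at h
  omega

/-- Let `ℛ` be a finite nonzero commutative ring and `f ∈ ℛ[t^±]` a
Laurent polynomial of positive relative degree (lowest degree `d₋ < d₊` highest degree)
whose highest and lowest degree coefficients are units.  Then there exists `N₀ ∈ ℕ` such that
for every `N ≥ 1` divisible by `N₀` there is `ξ_N ∈ ℛ[t^±]` with `ξ_N * f = 1 - t^N`;
moreover the highest and lowest degree coefficients of `ξ_N` are units, and the relative
degree of `ξ_N` is strictly less than `N`. -/
theorem stmt14 {ℛ : Type*} [CommRing ℛ] [Finite ℛ] [Nontrivial ℛ]
    (f : LaurentPolynomial ℛ) (dm dp : ℤ) (hdeg : dm < dp)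
    (hsupp : ∀ m : ℤ, f.coeff m ≠ 0 → dm ≤ m ∧ m ≤ dp)
    (htop : IsUnit (f.coeff dp)) (hbot : IsUnit (f.coeff dm)) :
    ∃ N₀ : ℕ, 0 < N₀ ∧ ∀ N : ℕ, 0 < N → N₀ ∣ N →
      ∃ ξ : LaurentPolynomial ℛ, ξ * f = 1 - T (N : ℤ) ∧
        ∃ em ep : ℤ, ep - em < (N : ℤ) ∧
          (∀ m : ℤ, ξ.coeff m ≠ 0 → em ≤ m ∧ m ≤ ep) ∧
          IsUnit (ξ.coeff ep) ∧ IsUnit (ξ.coeff em) := by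
  classical
  set u := htop.unit with hu
  have hu_coe : (u : ℛ) = f.coeff dp := rfl
  set d : ℕ := (dp - dm).toNat with hd
  have hdZ : (d : ℤ) = dp - dm := Int.toNat_of_nonneg (by omega)
  have hdpos : 0 < d := by omega
  -- the normalized Laurent polynomial
  set g : LaurentPolynomial ℛ := C (↑u⁻¹ : ℛ) * T (-dm) * f with hg
  have e1 : ∀ (a : ℛ) (n : ℤ) (h : LaurentPolynomial ℛ) (y : ℤ),
      ((C a * T n * h : LaurentPolynomial ℛ)).coeff y = a * h.coeff (-n + y) := by
    intro a n h y
    rw [← single_eq_C_mul_T]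
    exact AddMonoidAlgebra.coeff_single_mul_apply h a n y
  have hg_apply : ∀ m : ℤ, g.coeff m = (↑u⁻¹ : ℛ) * f.coeff (dm + m) := by
    intro m
    rw [hg, e1, neg_neg]
  -- build the polynomial p with toLaurent p = g
  set p : Polynomial ℛ := ∑ i ∈ Finset.range (d + 1), Polynomial.monomial i (g.coeff (i : ℤ)) with hp
  have hp_coeff : ∀ n : ℕ, p.coeff n = if n ≤ d then g.coeff (n : ℤ) else 0 := by
    intro n
    rw [hp, Polynomial.finset_sum_coeff]
    simp only [Polynomial.coeff_monomial]
    by_cases hn : n ≤ d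
    · rw [Finset.sum_eq_single n]
      · simp [hn]
      · intro b _ hb; simp [hb]
      · intro h; exact absurd (Finset.mem_range.mpr (by omega)) h
    · rw [if_neg hn]
      apply Finset.sum_eq_zero
      intro i hi
      rw [Finset.mem_range] at hi
      rw [if_neg (by omega)]
  have hg_zero_of_gt : ∀ m : ℤ, (d : ℤ) < m → g.coeff m = 0 := by
    intro m hm
    rw [hg_apply]
    rcases eq_or_ne (f.coeff (dm + m)) 0 with h | h
    · rw [h, mul_zero]
    · exact absurd ((hsupp _ h).2) (by omega)
  have hg_zero_of_neg : ∀ m : ℤ, m < 0 → g.coeff m = 0 := by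
    intro m hm
    rw [hg_apply]
    rcases eq_or_ne (f.coeff (dm + m)) 0 with h | h
    · rw [h, mul_zero]
    · exact absurd ((hsupp _ h).1) (by omega)
  have hpg : Polynomial.toLaurent p = g := by
    apply LaurentPolynomial.ext
    intro m
    rcases lt_or_ge m 0 with hm | hm
    · rw [toLaurent_apply_neg _ _ hm, hg_zero_of_neg _ hm]
    · obtain ⟨n, rfl⟩ := Int.eq_ofNat_of_zero_le hm
      rw [toLaurent_apply_coe, hp_coeff]
      by_cases hn : n ≤ d
      · rw [if_pos hn]
      · rw [if_neg hn, hg_zero_of_gt _ (by omega)]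
  have hgd : g.coeff (d : ℤ) = 1 := by
    rw [hg_apply]
    have : dm + (d : ℤ) = dp := by omega
    rw [this, ← hu_coe, Units.inv_mul]
  have hg0unit : IsUnit (g.coeff 0) := by
    rw [hg_apply]
    simpa using (Units.isUnit u⁻¹).mul hbot
  -- degree facts about p
  have hpd : p.natDegree = d := by
    apply le_antisymm
    · rw [Polynomial.natDegree_le_iff_coeff_eq_zero]
      intro N hN
      rw [hp_coeff, if_neg (by omega)]
    · apply Polynomial.le_natDegree_of_ne_zero
      rw [hp_coeff, if_pos le_rfl, hgd]
      exact one_ne_zero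
  have hpmonic : p.Monic := by
    unfold Polynomial.Monic Polynomial.leadingCoeff
    rw [hpd, hp_coeff, if_pos le_rfl, hgd]
  have hp0 : p.coeff 0 = g.coeff 0 := by rw [hp_coeff]; simp
  have hp0unit : IsUnit (p.coeff 0) := hp0 ▸ hg0unit
  -- the finite quotient ring
  have hfinA : Finite (AdjoinRoot p) := by
    have b := AdjoinRoot.powerBasisAux' hpmonic
    exact Finite.of_equiv _ (b.equivFun.toEquiv).symm
  -- the root is a unit
  have hxunit : IsUnit (AdjoinRoot.root p) := by
    obtain ⟨w, hw⟩ := hp0unit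
    refine IsUnit.of_mul_eq_one
      (-(algebraMap ℛ _ (↑w⁻¹ : ℛ)) * AdjoinRoot.mk p p.divX) ?_
    have h1 : (AdjoinRoot.mk p) (p.divX * Polynomial.X + Polynomial.C (p.coeff 0)) = 0 := by
      rw [Polynomial.divX_mul_X_add, AdjoinRoot.mk_self]
    rw [map_add, map_mul, AdjoinRoot.mk_X, AdjoinRoot.mk_C, add_eq_zero_iff_eq_neg] at h1
    have : AdjoinRoot.root p * (-(algebraMap ℛ _ (↑w⁻¹ : ℛ)) * AdjoinRoot.mk p p.divX)
        = algebraMap ℛ _ (↑w⁻¹ : ℛ) * (AdjoinRoot.mk p p.divX * AdjoinRoot.root p) * (-1) := by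
      ring
    rw [this, h1, ← hw, AdjoinRoot.algebraMap_eq]
    calc (AdjoinRoot.of p) (↑w⁻¹ : ℛ) * -(AdjoinRoot.of p) (↑w : ℛ) * -1
        = (AdjoinRoot.of p) ((↑w⁻¹ : ℛ) * (↑w : ℛ)) := by rw [map_mul]; ring
      _ = 1 := by rw [Units.inv_mul, map_one]
  set xu := hxunit.unit with hxu
  refine ⟨orderOf xu, orderOf_pos xu, fun N hN hdvd => ?_⟩
  -- p divides X^N - 1
  have hpow : xu ^ N = 1 := orderOf_dvd_iff_pow_eq_one.mp hdvd
  have hroot : (AdjoinRoot.root p) ^ N = 1 := by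
    have := congrArg (Units.val) hpow
    simpa [hxu] using this
  have hdvdp : p ∣ Polynomial.X ^ N - 1 := by
    rw [← AdjoinRoot.mk_eq_zero, map_sub, map_pow, AdjoinRoot.mk_X, map_one, hroot, sub_self]
  obtain ⟨q, hq⟩ := hdvdp
  -- facts about X^N - 1
  have hXN : (Polynomial.X ^ N - 1 : Polynomial ℛ) = Polynomial.X ^ N - Polynomial.C 1 := by
    rw [map_one]
  have hXNmonic : (Polynomial.X ^ N - 1 : Polynomial ℛ).Monic := by
    rw [hXN]; exact Polynomial.monic_X_pow_sub_C _ (by omega)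
  have hXNdeg : (Polynomial.X ^ N - 1 : Polynomial ℛ).natDegree = N := by
    rw [hXN]; exact Polynomial.natDegree_X_pow_sub_C
  have hqne : q ≠ 0 := by
    rintro rfl
    rw [mul_zero] at hq
    exact hXNmonic.ne_zero hq
  have hlead : p.leadingCoeff * q.leadingCoeff ≠ 0 := by
    rw [hpmonic.leadingCoeff, one_mul]
    exact Polynomial.leadingCoeff_ne_zero.mpr hqne
  have hqdeg : q.natDegree = N - d := by
    have := Polynomial.natDegree_mul' hlead
    rw [← hq, hXNdeg, hpd] at this
    omega
  have hdleN : d ≤ N := by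
    have := Polynomial.natDegree_mul' hlead
    rw [← hq, hXNdeg, hpd] at this
    omega
  have hqlead : q.leadingCoeff = 1 := by
    have := Polynomial.leadingCoeff_mul' hlead
    rw [← hq, hXNmonic.leadingCoeff, hpmonic.leadingCoeff, one_mul] at this
    exact this.symm
  have hq0unit : IsUnit (q.coeff 0) := by
    have h0 : (Polynomial.X ^ N - 1 : Polynomial ℛ).coeff 0 = -1 := by
      have hN0 : ¬ (0 = N) := by omega
      rw [Polynomial.coeff_sub, Polynomial.coeff_X_pow, Polynomial.coeff_one, if_neg hN0,
        if_pos rfl]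
      ring
    have : p.coeff 0 * q.coeff 0 = -1 := by
      rw [← Polynomial.mul_coeff_zero, ← hq, h0]
    exact isUnit_of_mul_isUnit_right (this ▸ IsUnit.neg isUnit_one)
  -- construct ξ
  refine ⟨C (-(↑u⁻¹ : ℛ)) * T (-dm) * Polynomial.toLaurent q, ?_, ?_⟩
  · -- ξ * f = 1 - T N
    have hlq : Polynomial.toLaurent p * Polynomial.toLaurent q = T (N : ℤ) - 1 := by
      rw [← map_mul, ← hq, map_sub, map_pow, Polynomial.toLaurent_X, map_one, T_pow, mul_one]
    rw [hpg] at hlq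
    have hC : C (-(↑u⁻¹ : ℛ)) = - C (↑u⁻¹ : ℛ) := by rw [map_neg]
    calc C (-(↑u⁻¹ : ℛ)) * T (-dm) * Polynomial.toLaurent q * f
        = -(C (↑u⁻¹ : ℛ) * T (-dm) * f * Polynomial.toLaurent q) := by rw [hC]; ring
      _ = -(T (N : ℤ) - 1) := by rw [hlq]
      _ = 1 - T (N : ℤ) := by ring
  · -- bounds and units
    set ξ : LaurentPolynomial ℛ := C (-(↑u⁻¹ : ℛ)) * T (-dm) * Polynomial.toLaurent q with hξ
    have hξ_apply : ∀ m : ℤ, ξ.coeff m = -(↑u⁻¹ : ℛ) * (Polynomial.toLaurent q).coeff (dm + m) := by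
      intro m
      rw [hξ, e1, neg_neg]
    refine ⟨-dm, ((N - d : ℕ) : ℤ) - dm, by push_cast; omega, ?_, ?_, ?_⟩
    · intro m hm
      rw [hξ_apply] at hm
      have h2 : (Polynomial.toLaurent q).coeff (dm + m) ≠ 0 := by
        intro h; rw [h, mul_zero] at hm; exact hm rfl
      have hge : 0 ≤ dm + m := by
        by_contra h
        exact h2 (toLaurent_apply_neg _ _ (by omega))
      obtain ⟨n, hn⟩ := Int.eq_ofNat_of_zero_le hge
      rw [hn, toLaurent_apply_coe] at h2
      have := Polynomial.le_natDegree_of_ne_zero h2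
      rw [hqdeg] at this
      constructor <;> omega
    · rw [hξ_apply]
      have h3 : dm + (((N - d : ℕ) : ℤ) - dm) = ((N - d : ℕ) : ℤ) := by ring
      rw [h3, toLaurent_apply_coe]
      have : q.coeff (N - d) = 1 := by
        rw [← hqdeg]; exact hqlead
      rw [this, mul_one]
      exact (Units.isUnit u⁻¹).neg
    · rw [hξ_apply]
      have h3 : dm + -dm = ((0 : ℕ) : ℤ) := by simp
      rw [h3, toLaurent_apply_coe]
      exact ((Units.isUnit u⁻¹).neg).mul hq0unit
end

section
/- Let B ∈ M_ℓ(R) be a matrix over R = ℤ_p[t^±] with a dominant diagonal. Then the total degree of det B equals the total degree of the product of the diagonal entries: δ(det B) = δ(∏_i B_{ii}). -/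
set_option linter.unusedSectionVars false

namespace Stmt17

/-- `R = ℤ_p[t^±]`. -/
abbrev Ap (p : ℕ) := LaurentPolynomial (ZMod p)

/-- The upper degree `deg₊ f ∈ ℤ ∪ {-∞}` of a Laurent polynomial. -/
noncomputable def degp {p : ℕ} (f : Ap p) : WithBot ℤ := f.coeff.support.max

/-- The lower degree `deg₋ f ∈ ℤ ∪ {∞}` of a Laurent polynomial. -/
noncomputable def degm {p : ℕ} (f : Ap p) : WithTop ℤ := f.coeff.support.min

/-- `δ g <₊ δ f`: `deg₊ g < deg₊ f` and `deg₋ g ≥ deg₋ f`. -/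
def LtPlus {p : ℕ} (g f : Ap p) : Prop := degp g < degp f ∧ degm f ≤ degm g

/-- `δ g <₋ δ f`: `deg₊ g ≤ deg₊ f` and `deg₋ g > deg₋ f`. -/
def LtMinus {p : ℕ} (g f : Ap p) : Prop := degp g ≤ degp f ∧ degm f < degm g

/-- A square matrix over `ℤ_p[t^±]` has a dominant diagonal if its diagonal entries are
nonzero, `δ B_{ij} <₊ δ B_{ii}` for `j > i`, and `δ B_{ij} <₋ δ B_{ii}` for `j < i`. -/
def DominantDiagonal {p ℓ : ℕ} (B : Matrix (Fin ℓ) (Fin ℓ) (Ap p)) : Prop :=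
  (∀ i, B i i ≠ 0) ∧
  (∀ i j, i < j → LtPlus (B i j) (B i i)) ∧
  (∀ i j, j < i → LtMinus (B i j) (B i i))

/-! ### Auxiliary lemmas -/

section Aux

variable {p : ℕ} [Fact p.Prime] {f g : Ap p}

lemma degp_eq_bot_iff : degp f = ⊥ ↔ f = 0 := by
  rw [degp, Finset.max_eq_bot, Finsupp.support_eq_empty, AddMonoidAlgebra.coeff_eq_zero]

lemma degm_eq_top_iff : degm f = ⊤ ↔ f = 0 := by
  rw [degm, Finset.min_eq_top, Finsupp.support_eq_empty, AddMonoidAlgebra.coeff_eq_zero]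

lemma degp_coe (hf : f ≠ 0) :
    degp f = ↑(f.coeff.support.max' (Finsupp.support_nonempty_iff.2 (mt AddMonoidAlgebra.coeff_eq_zero.1 hf))) :=
  (Finset.coe_max' _).symm

lemma degm_coe (hf : f ≠ 0) :
    degm f = ↑(f.coeff.support.min' (Finsupp.support_nonempty_iff.2 (mt AddMonoidAlgebra.coeff_eq_zero.1 hf))) :=
  (Finset.coe_min' _).symm

lemma mul_apply_of_le {af ag : ℤ} (hf : ∀ a ∈ f.coeff.support, a ≤ af)
    (hg : ∀ a ∈ g.coeff.support, a ≤ ag) :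
    (f * g).coeff (af + ag) = f.coeff af * g.coeff ag := by
  classical
  rw [AddMonoidAlgebra.coeff_mul, Finsupp.sum, Finset.sum_eq_single af]
  · rw [Finsupp.sum, Finset.sum_eq_single ag]
    · rw [if_pos rfl]
    · intro b hb hne
      exact if_neg fun he => hne (by omega)
    · intro h
      rw [if_pos rfl, Finsupp.notMem_support_iff.1 h, mul_zero]
  · intro a ha hne
    have h1 := hf a ha
    rw [Finsupp.sum]
    refine Finset.sum_eq_zero fun b hb => if_neg fun he => ?_
    have h2 := hg b hb
    have : a < af := lt_of_le_of_ne h1 hne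
    omega
  · intro h
    rw [Finsupp.sum]
    refine Finset.sum_eq_zero fun b _ => ?_
    rw [Finsupp.notMem_support_iff.1 h, zero_mul]
    exact ite_self 0

lemma mul_apply_of_ge {af ag : ℤ} (hf : ∀ a ∈ f.coeff.support, af ≤ a)
    (hg : ∀ a ∈ g.coeff.support, ag ≤ a) :
    (f * g).coeff (af + ag) = f.coeff af * g.coeff ag := by
  classical
  rw [AddMonoidAlgebra.coeff_mul, Finsupp.sum, Finset.sum_eq_single af]
  · rw [Finsupp.sum, Finset.sum_eq_single ag]
    · rw [if_pos rfl]
    · intro b hb hne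
      exact if_neg fun he => hne (by omega)
    · intro h
      rw [if_pos rfl, Finsupp.notMem_support_iff.1 h, mul_zero]
  · intro a ha hne
    have h1 := hf a ha
    rw [Finsupp.sum]
    refine Finset.sum_eq_zero fun b hb => if_neg fun he => ?_
    have h2 := hg b hb
    have : af < a := lt_of_le_of_ne h1 (Ne.symm hne)
    omega
  · intro h
    rw [Finsupp.sum]
    refine Finset.sum_eq_zero fun b _ => ?_
    rw [Finsupp.notMem_support_iff.1 h, zero_mul]
    exact ite_self 0

lemma degp_mul (hf : f ≠ 0) (hg : g ≠ 0) : degp (f * g) = degp f + degp g := by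
  set Mf := f.coeff.support.max' (Finsupp.support_nonempty_iff.2 (mt AddMonoidAlgebra.coeff_eq_zero.1 hf)) with hMf
  set Mg := g.coeff.support.max' (Finsupp.support_nonempty_iff.2 (mt AddMonoidAlgebra.coeff_eq_zero.1 hg)) with hMg
  have key : (f * g).coeff (Mf + Mg) = f.coeff Mf * g.coeff Mg :=
    mul_apply_of_le (fun a ha => Finset.le_max' _ a ha) (fun a ha => Finset.le_max' _ a ha)
  have hfm : f.coeff Mf ≠ 0 := Finsupp.mem_support_iff.1 (Finset.max'_mem _ _)
  have hgm : g.coeff Mg ≠ 0 := Finsupp.mem_support_iff.1 (Finset.max'_mem _ _)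
  have hne : (f * g).coeff (Mf + Mg) ≠ 0 := by rw [key]; exact mul_ne_zero hfm hgm
  have hmem : Mf + Mg ∈ (f * g).coeff.support := Finsupp.mem_support_iff.2 hne
  rw [degp_coe hf, degp_coe hg, ← hMf, ← hMg, ← WithBot.coe_add]
  apply le_antisymm
  · rw [degp, Finset.max_eq_sup_withBot]
    refine Finset.sup_le fun a ha => ?_
    obtain ⟨b, hb, c, hc, rfl⟩ := Finset.mem_add.1 (AddMonoidAlgebra.support_coeff_mul_subset f g ha)
    exact_mod_cast add_le_add (Finset.le_max' _ b hb) (Finset.le_max' _ c hc)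
  · exact Finset.le_max hmem

lemma degm_mul (hf : f ≠ 0) (hg : g ≠ 0) : degm (f * g) = degm f + degm g := by
  set Mf := f.coeff.support.min' (Finsupp.support_nonempty_iff.2 (mt AddMonoidAlgebra.coeff_eq_zero.1 hf)) with hMf
  set Mg := g.coeff.support.min' (Finsupp.support_nonempty_iff.2 (mt AddMonoidAlgebra.coeff_eq_zero.1 hg)) with hMg
  have key : (f * g).coeff (Mf + Mg) = f.coeff Mf * g.coeff Mg :=
    mul_apply_of_ge (fun a ha => Finset.min'_le _ a ha) (fun a ha => Finset.min'_le _ a ha)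
  have hfm : f.coeff Mf ≠ 0 := Finsupp.mem_support_iff.1 (Finset.min'_mem _ _)
  have hgm : g.coeff Mg ≠ 0 := Finsupp.mem_support_iff.1 (Finset.min'_mem _ _)
  have hne : (f * g).coeff (Mf + Mg) ≠ 0 := by rw [key]; exact mul_ne_zero hfm hgm
  have hmem : Mf + Mg ∈ (f * g).coeff.support := Finsupp.mem_support_iff.2 hne
  rw [degm_coe hf, degm_coe hg, ← hMf, ← hMg, ← WithTop.coe_add]
  apply le_antisymm
  · exact Finset.min_le hmem
  · rw [degm, Finset.min_eq_inf_withTop]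
    refine Finset.le_inf fun a ha => ?_
    obtain ⟨b, hb, c, hc, rfl⟩ := Finset.mem_add.1 (AddMonoidAlgebra.support_coeff_mul_subset f g ha)
    exact_mod_cast add_le_add (Finset.min'_le _ b hb) (Finset.min'_le _ c hc)

lemma degp_one : degp (1 : Ap p) = 0 := by
  have : (1 : Ap p).coeff.support = {0} := by
    rw [AddMonoidAlgebra.one_def, AddMonoidAlgebra.coeff_single, Finsupp.support_single_ne_zero _ one_ne_zero]
  rw [degp, this, Finset.max_singleton]
  rfl

lemma degm_one : degm (1 : Ap p) = 0 := by
  have : (1 : Ap p).coeff.support = {0} := by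
    rw [AddMonoidAlgebra.one_def, AddMonoidAlgebra.coeff_single, Finsupp.support_single_ne_zero _ one_ne_zero]
  rw [degm, this, Finset.min_singleton]
  rfl

lemma degp_prod {ι : Type*} (s : Finset ι) (f : ι → Ap p) (hf : ∀ i ∈ s, f i ≠ 0) :
    degp (∏ i ∈ s, f i) = ∑ i ∈ s, degp (f i) := by
  classical
  induction s using Finset.cons_induction with
  | empty => simpa using degp_one
  | cons a s ha ih =>
    rw [Finset.prod_cons, Finset.sum_cons,
      degp_mul (hf a (Finset.mem_cons_self a s))
        (Finset.prod_ne_zero_iff.2 fun i hi => hf i (Finset.mem_cons_of_mem hi)),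
      ih fun i hi => hf i (Finset.mem_cons_of_mem hi)]

lemma degm_prod {ι : Type*} (s : Finset ι) (f : ι → Ap p) (hf : ∀ i ∈ s, f i ≠ 0) :
    degm (∏ i ∈ s, f i) = ∑ i ∈ s, degm (f i) := by
  classical
  induction s using Finset.cons_induction with
  | empty => simpa using degm_one
  | cons a s ha ih =>
    rw [Finset.prod_cons, Finset.sum_cons,
      degm_mul (hf a (Finset.mem_cons_self a s))
        (Finset.prod_ne_zero_iff.2 fun i hi => hf i (Finset.mem_cons_of_mem hi)),
      ih fun i hi => hf i (Finset.mem_cons_of_mem hi)]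

lemma degp_add_eq_left (h : degp g < degp f) : degp (f + g) = degp f := by
  have hf : f ≠ 0 := by
    intro h0
    rw [h0, degp_eq_bot_iff.2 rfl] at h
    exact (not_lt_bot h)
  set Mf := f.coeff.support.max' (Finsupp.support_nonempty_iff.2 (mt AddMonoidAlgebra.coeff_eq_zero.1 hf)) with hMf
  have hgMf : g.coeff Mf = 0 := by
    by_contra hne
    have : (Mf : WithBot ℤ) ≤ degp g := Finset.le_max (Finsupp.mem_support_iff.2 hne)
    rw [degp_coe hf, ← hMf] at h
    exact absurd (this.trans_lt h) (lt_irrefl _)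
  have hmem : Mf ∈ (f + g).coeff.support := by
    rw [Finsupp.mem_support_iff, AddMonoidAlgebra.coeff_add, Finsupp.add_apply, hgMf, add_zero]
    exact Finsupp.mem_support_iff.1 (Finset.max'_mem _ _)
  apply le_antisymm
  · rw [degp, Finset.max_eq_sup_withBot]
    refine Finset.sup_le fun a ha => ?_
    rcases Finset.mem_union.1 (Finsupp.support_add ha) with h' | h'
    · exact Finset.le_max h'
    · exact (Finset.le_max h').trans h.le
  · rw [degp_coe hf, ← hMf]
    exact Finset.le_max hmem

lemma degm_add_eq_left (h : degm f < degm g) : degm (f + g) = degm f := by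
  have hf : f ≠ 0 := by
    intro h0
    rw [h0, degm_eq_top_iff.2 rfl] at h
    exact (not_top_lt h)
  set Mf := f.coeff.support.min' (Finsupp.support_nonempty_iff.2 (mt AddMonoidAlgebra.coeff_eq_zero.1 hf)) with hMf
  have hgMf : g.coeff Mf = 0 := by
    by_contra hne
    have : degm g ≤ (Mf : WithTop ℤ) := Finset.min_le (Finsupp.mem_support_iff.2 hne)
    rw [degm_coe hf, ← hMf] at h
    exact absurd (h.trans_le this) (lt_irrefl _)
  have hmem : Mf ∈ (f + g).coeff.support := by
    rw [Finsupp.mem_support_iff, AddMonoidAlgebra.coeff_add, Finsupp.add_apply, hgMf, add_zero]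
    exact Finsupp.mem_support_iff.1 (Finset.min'_mem _ _)
  apply le_antisymm
  · rw [degm_coe hf, ← hMf]
    exact Finset.min_le hmem
  · rw [degm, Finset.min_eq_inf_withTop]
    refine Finset.le_inf fun a ha => ?_
    rcases Finset.mem_union.1 (Finsupp.support_add ha) with h' | h'
    · exact Finset.min_le h'
    · exact h.le.trans (Finset.min_le h')

lemma degp_sum_lt {ι : Type*} {s : Finset ι} {f : ι → Ap p} {b : WithBot ℤ}
    (hb : ⊥ < b) (h : ∀ j ∈ s, degp (f j) < b) :
    degp (∑ j ∈ s, f j) < b := by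
  classical
  rw [degp, AddMonoidAlgebra.coeff_sum, Finset.max_eq_sup_withBot]
  refine (Finset.sup_lt_iff hb).2 fun a ha => ?_
  obtain ⟨j, hj, haj⟩ := Finset.mem_biUnion.1 (Finsupp.support_finset_sum ha)
  exact lt_of_le_of_lt (Finset.le_max haj) (h j hj)

lemma degm_lt_sum {ι : Type*} {s : Finset ι} {f : ι → Ap p} {b : WithTop ℤ}
    (hb : b < ⊤) (h : ∀ j ∈ s, b < degm (f j)) :
    b < degm (∑ j ∈ s, f j) := by
  classical
  rw [degm, AddMonoidAlgebra.coeff_sum, Finset.min_eq_inf_withTop]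
  refine (Finset.lt_inf_iff hb).2 fun a ha => ?_
  obtain ⟨j, hj, haj⟩ := Finset.mem_biUnion.1 (Finsupp.support_finset_sum ha)
  exact lt_of_lt_of_le (h j hj) (Finset.min_le haj)

lemma degp_neg : degp (-f) = degp f := by
  rw [degp, degp, AddMonoidAlgebra.coeff_neg, Finsupp.support_neg]

lemma degm_neg : degm (-f) = degm f := by
  rw [degm, degm, AddMonoidAlgebra.coeff_neg, Finsupp.support_neg]

lemma degp_smul_sign {ℓ : ℕ} (σ : Equiv.Perm (Fin ℓ)) (x : Ap p) :
    degp (Equiv.Perm.sign σ • x) = degp x := by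
  rcases Int.units_eq_one_or (Equiv.Perm.sign σ) with h | h <;> rw [h]
  · rw [one_smul]
  · rw [Units.smul_def]
    push_cast
    rw [neg_smul, one_smul, degp_neg]

lemma degm_smul_sign {ℓ : ℕ} (σ : Equiv.Perm (Fin ℓ)) (x : Ap p) :
    degm (Equiv.Perm.sign σ • x) = degm x := by
  rcases Int.units_eq_one_or (Equiv.Perm.sign σ) with h | h <;> rw [h]
  · rw [one_smul]
  · rw [Units.smul_def]
    push_cast
    rw [neg_smul, one_smul, degm_neg]

lemma exists_lt_apply {ℓ : ℕ} (σ : Equiv.Perm (Fin ℓ)) (hσ : σ ≠ 1) : ∃ i, i < σ i := by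
  by_contra h
  push_neg at h
  apply hσ
  have hval : ∀ i ∈ Finset.univ, ((σ i : Fin ℓ) : ℕ) ≤ (i : ℕ) := fun i _ => h i
  have hsum : ∑ i : Fin ℓ, ((σ i : Fin ℓ) : ℕ) = ∑ i : Fin ℓ, (i : ℕ) :=
    Equiv.sum_comp σ (fun i => (i : ℕ))
  have := (Finset.sum_eq_sum_iff_of_le hval).1 hsum
  ext i
  exact congrArg Fin.val (Fin.ext (this i (Finset.mem_univ i)) : σ i = i)

lemma exists_apply_lt {ℓ : ℕ} (σ : Equiv.Perm (Fin ℓ)) (hσ : σ ≠ 1) : ∃ i, σ i < i := by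
  obtain ⟨i, hi⟩ := exists_lt_apply σ⁻¹ (by simpa using inv_ne_one.2 hσ)
  exact ⟨σ⁻¹ i, by simpa using hi⟩

lemma det_expand {ℓ : ℕ} (C : Matrix (Fin ℓ) (Fin ℓ) (Ap p)) :
    C.det = ∑ σ : Equiv.Perm (Fin ℓ), Equiv.Perm.sign σ • ∏ i, C i (σ i) := by
  rw [← Matrix.det_transpose, Matrix.det_apply]
  simp [Matrix.transpose_apply]

lemma key_degp {ℓ : ℕ} (C : Matrix (Fin ℓ) (Fin ℓ) (Ap p))
    (h0 : ∀ i, C i i ≠ 0)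
    (hle : ∀ i j, degp (C i j) ≤ degp (C i i))
    (hlt : ∀ i j, i < j → degp (C i j) < degp (C i i)) :
    degp C.det = degp (∏ i, C i i) := by
  classical
  have hprod : (∏ i, C i i) ≠ 0 := Finset.prod_ne_zero_iff.2 fun i _ => h0 i
  have hbne : (⊥ : WithBot ℤ) < degp (∏ i, C i i) :=
    bot_lt_iff_ne_bot.2 fun h => hprod (degp_eq_bot_iff.1 h)
  rw [det_expand]
  rw [← Finset.add_sum_erase Finset.univ _ (Finset.mem_univ (1 : Equiv.Perm (Fin ℓ)))]
  have h1 : (Equiv.Perm.sign (1 : Equiv.Perm (Fin ℓ))) • ∏ i, C i ((1 : Equiv.Perm (Fin ℓ)) i)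
      = ∏ i, C i i := by simp
  rw [h1]
  have hrest : ∀ σ ∈ Finset.univ.erase (1 : Equiv.Perm (Fin ℓ)),
      degp (Equiv.Perm.sign σ • ∏ i, C i (σ i)) < degp (∏ i, C i i) := by
    intro σ hσ
    have hσ1 : σ ≠ 1 := (Finset.mem_erase.1 hσ).1
    rw [degp_smul_sign]
    by_cases hz : ∀ i, C i (σ i) ≠ 0
    · obtain ⟨i0, hi0⟩ := exists_lt_apply σ hσ1
      have htail : (∑ i ∈ Finset.univ.erase i0, degp (C i i)) ≠ ⊥ := by
        rw [← degp_prod _ _ (fun i _ => h0 i)]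
        exact fun h =>
          (Finset.prod_ne_zero_iff.2 fun i _ => h0 i) (degp_eq_bot_iff.1 h)
      calc degp (∏ i, C i (σ i)) = ∑ i, degp (C i (σ i)) :=
              degp_prod _ _ (fun i _ => hz i)
        _ = degp (C i0 (σ i0)) + ∑ i ∈ Finset.univ.erase i0, degp (C i (σ i)) :=
              (Finset.add_sum_erase _ _ (Finset.mem_univ i0)).symm
        _ ≤ degp (C i0 (σ i0)) + ∑ i ∈ Finset.univ.erase i0, degp (C i i) :=
              add_le_add_right (Finset.sum_le_sum fun i _ => hle i (σ i)) _
        _ = (∑ i ∈ Finset.univ.erase i0, degp (C i i)) + degp (C i0 (σ i0)) := add_comm _ _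
        _ < (∑ i ∈ Finset.univ.erase i0, degp (C i i)) + degp (C i0 i0) :=
              WithBot.add_lt_add_left htail (hlt i0 (σ i0) hi0)
        _ = ∑ i, degp (C i i) := by
              rw [add_comm]
              exact Finset.add_sum_erase Finset.univ (fun i => degp (C i i)) (Finset.mem_univ i0)
        _ = degp (∏ i, C i i) := (degp_prod _ _ (fun i _ => h0 i)).symm
    · push_neg at hz
      obtain ⟨i, hi⟩ := hz
      rw [Finset.prod_eq_zero (f := fun i => C i (σ i)) (Finset.mem_univ i) hi,
        degp_eq_bot_iff.2 rfl]
      exact hbne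
  rw [degp_add_eq_left (degp_sum_lt hbne hrest)]

lemma key_degm {ℓ : ℕ} (C : Matrix (Fin ℓ) (Fin ℓ) (Ap p))
    (h0 : ∀ i, C i i ≠ 0)
    (hle : ∀ i j, degm (C i i) ≤ degm (C i j))
    (hlt : ∀ i j, j < i → degm (C i i) < degm (C i j)) :
    degm C.det = degm (∏ i, C i i) := by
  classical
  have hprod : (∏ i, C i i) ≠ 0 := Finset.prod_ne_zero_iff.2 fun i _ => h0 i
  have hbne : degm (∏ i, C i i) < (⊤ : WithTop ℤ) :=
    lt_top_iff_ne_top.2 fun h => hprod (degm_eq_top_iff.1 h)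
  rw [det_expand]
  rw [← Finset.add_sum_erase Finset.univ _ (Finset.mem_univ (1 : Equiv.Perm (Fin ℓ)))]
  have h1 : (Equiv.Perm.sign (1 : Equiv.Perm (Fin ℓ))) • ∏ i, C i ((1 : Equiv.Perm (Fin ℓ)) i)
      = ∏ i, C i i := by simp
  rw [h1]
  have hrest : ∀ σ ∈ Finset.univ.erase (1 : Equiv.Perm (Fin ℓ)),
      degm (∏ i, C i i) < degm (Equiv.Perm.sign σ • ∏ i, C i (σ i)) := by
    intro σ hσ
    have hσ1 : σ ≠ 1 := (Finset.mem_erase.1 hσ).1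
    rw [degm_smul_sign]
    by_cases hz : ∀ i, C i (σ i) ≠ 0
    · obtain ⟨i0, hi0⟩ := exists_apply_lt σ hσ1
      have htail : (∑ i ∈ Finset.univ.erase i0, degm (C i i)) ≠ ⊤ := by
        rw [← degm_prod _ _ (fun i _ => h0 i)]
        exact fun h =>
          (Finset.prod_ne_zero_iff.2 fun i _ => h0 i) (degm_eq_top_iff.1 h)
      calc degm (∏ i, C i i) = ∑ i, degm (C i i) := degm_prod _ _ (fun i _ => h0 i)
        _ = (∑ i ∈ Finset.univ.erase i0, degm (C i i)) + degm (C i0 i0) := by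
              rw [add_comm]
              exact (Finset.add_sum_erase Finset.univ (fun i => degm (C i i))
                (Finset.mem_univ i0)).symm
        _ < (∑ i ∈ Finset.univ.erase i0, degm (C i i)) + degm (C i0 (σ i0)) :=
              WithTop.add_lt_add_left htail (hlt i0 (σ i0) hi0)
        _ = degm (C i0 (σ i0)) + ∑ i ∈ Finset.univ.erase i0, degm (C i i) := add_comm _ _
        _ ≤ degm (C i0 (σ i0)) + ∑ i ∈ Finset.univ.erase i0, degm (C i (σ i)) := by
              refine add_le_add_right (Finset.sum_le_sum fun i _ => hle i (σ i)) _
        _ = ∑ i, degm (C i (σ i)) :=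
              Finset.add_sum_erase Finset.univ (fun i => degm (C i (σ i))) (Finset.mem_univ i0)
        _ = degm (∏ i, C i (σ i)) := (degm_prod _ _ (fun i _ => hz i)).symm
    · push_neg at hz
      obtain ⟨i, hi⟩ := hz
      rw [Finset.prod_eq_zero (f := fun i => C i (σ i)) (Finset.mem_univ i) hi,
        degm_eq_top_iff.2 rfl]
      exact hbne
  rw [degm_add_eq_left (degm_lt_sum hbne hrest)]

end Aux

/-- Let `B ∈ M_ℓ(R)` be a matrix over `R = ℤ_p[t^±]` (`p` prime) with a
dominant diagonal.  Then the total degree of `det B` equals the total degree of the product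
of the diagonal entries: `δ (det B) = δ (∏ᵢ B_{ii})`. -/
theorem stmt17 (p : ℕ) (hp : p.Prime) (ℓ : ℕ)
    (B : Matrix (Fin ℓ) (Fin ℓ) (Ap p)) (hB : DominantDiagonal B) :
    degp B.det = degp (∏ i, B i i) ∧ degm B.det = degm (∏ i, B i i) := by
  haveI : Fact p.Prime := ⟨hp⟩
  obtain ⟨h0, hplus, hminus⟩ := hB
  constructor
  · refine key_degp B h0 (fun i j => ?_) (fun i j hij => (hplus i j hij).1)
    rcases lt_trichotomy i j with h | h | h
    · exact (hplus i j h).1.le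
    · rw [h]
    · exact (hminus i j h).1
  · refine key_degm B h0 (fun i j => ?_) (fun i j hij => (hminus i j hij).2)
    rcases lt_trichotomy i j with h | h | h
    · exact (hplus i j h).2
    · rw [h]
    · exact (hminus i j h).2.le

end Stmt17
end

section
/- Let B ∈ M_ℓ(R) over R = ℤ_p[t^±] be Hermitian (B = B†, where † is transpose composed with the involution t ↦ t⁻¹) and have a dominant diagonal. Then for any vector v ∈ R^ℓ there exist q, w ∈ R^ℓ with v = Bq + w and δw_i <₊ δB_{ii} for all i (division with remainder). -/
open LaurentPolynomial

namespace Stmt18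

/-- `R = ℤ_p[t^±]`. -/
abbrev Ap (p : ℕ) := LaurentPolynomial (ZMod p)

/-- The upper degree `deg₊ f ∈ ℤ ∪ {-∞}` of a Laurent polynomial. -/
noncomputable def degp {p : ℕ} (f : Ap p) : WithBot ℤ := f.coeff.support.max

/-- The lower degree `deg₋ f ∈ ℤ ∪ {∞}` of a Laurent polynomial. -/
noncomputable def degm {p : ℕ} (f : Ap p) : WithTop ℤ := f.coeff.support.min

/-- `δ g <₊ δ f`: `deg₊ g < deg₊ f` and `deg₋ g ≥ deg₋ f`. -/
def LtPlus {p : ℕ} (g f : Ap p) : Prop := degp g < degp f ∧ degm f ≤ degm g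

/-- `δ g <₋ δ f`: `deg₊ g ≤ deg₊ f` and `deg₋ g > deg₋ f`. -/
def LtMinus {p : ℕ} (g f : Ap p) : Prop := degp g ≤ degp f ∧ degm f < degm g

/-- A square matrix over `ℤ_p[t^±]` has a dominant diagonal if its diagonal entries are
nonzero, `δ B_{ij} <₊ δ B_{ii}` for `j > i`, and `δ B_{ij} <₋ δ B_{ii}` for `j < i`. -/
def DominantDiagonal {p ℓ : ℕ} (B : Matrix (Fin ℓ) (Fin ℓ) (Ap p)) : Prop :=
  (∀ i, B i i ≠ 0) ∧
  (∀ i j, i < j → LtPlus (B i j) (B i i)) ∧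
  (∀ i j, j < i → LtMinus (B i j) (B i i))

/-! ### Auxiliary lemmas -/

noncomputable instance {p : ℕ} : CoeFun (Ap p) (fun _ => ℤ → ZMod p) := ⟨fun f => f.coeff⟩

section Aux

variable {p : ℕ}

lemma coeff_zero_of_degp_le {f : Ap p} {c : ℤ} (h : degp f ≤ (c : WithBot ℤ))
    {m : ℤ} (hm : c < m) : f m = 0 := by
  by_contra h0
  have h1 : (m : WithBot ℤ) ≤ (c : WithBot ℤ) :=
    le_trans (Finset.le_max (Finsupp.mem_support_iff.2 h0)) h
  exact absurd (WithBot.coe_le_coe.1 h1) (not_le.2 hm)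

lemma coeff_zero_of_degp_lt {f : Ap p} {c : ℤ} (h : degp f < (c : WithBot ℤ))
    {m : ℤ} (hm : c ≤ m) : f m = 0 := by
  by_contra h0
  have h1 : (m : WithBot ℤ) < (c : WithBot ℤ) :=
    lt_of_le_of_lt (Finset.le_max (Finsupp.mem_support_iff.2 h0)) h
  exact absurd (WithBot.coe_lt_coe.1 h1) (not_lt.2 hm)

lemma coeff_zero_of_le_degm {f : Ap p} {c : ℤ} (h : (c : WithTop ℤ) ≤ degm f)
    {m : ℤ} (hm : m < c) : f m = 0 := by
  by_contra h0
  have h1 : (c : WithTop ℤ) ≤ (m : WithTop ℤ) :=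
    le_trans h (Finset.min_le (Finsupp.mem_support_iff.2 h0))
  exact absurd (WithTop.coe_le_coe.1 h1) (not_le.2 hm)

lemma coeff_zero_of_lt_degm {f : Ap p} {c : ℤ} (h : (c : WithTop ℤ) < degm f)
    {m : ℤ} (hm : m ≤ c) : f m = 0 := by
  by_contra h0
  have h1 : (c : WithTop ℤ) < (m : WithTop ℤ) :=
    lt_of_lt_of_le h (Finset.min_le (Finsupp.mem_support_iff.2 h0))
  exact absurd (WithTop.coe_lt_coe.1 h1) (not_lt.2 hm)

lemma degp_lt_of_coeff {f : Ap p} {c : ℤ} (h : ∀ m : ℤ, c ≤ m → f m = 0) :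
    degp f < (c : WithBot ℤ) := by
  rw [degp]
  rcases Finset.eq_empty_or_nonempty f.coeff.support with he | hne
  · simp [he]
  · rw [← Finset.coe_max' hne, WithBot.coe_lt_coe]
    by_contra h0
    have hmem := Finset.max'_mem f.coeff.support hne
    exact Finsupp.mem_support_iff.1 hmem (h _ (not_lt.1 h0))

lemma le_degm_of_coeff {f : Ap p} {c : ℤ} (h : ∀ m : ℤ, m < c → f m = 0) :
    (c : WithTop ℤ) ≤ degm f := by
  rw [degm, Finset.le_min_iff]
  intro a ha
  rw [WithTop.coe_le_coe]
  by_contra h0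
  exact Finsupp.mem_support_iff.1 ha (h _ (not_le.1 h0))

/-- Coefficient of `(B.mulVec (fun i => q₀ i • T s)) j` at `m`. -/
lemma mulVec_smul_T_coeff {ℓ : ℕ} (B : Matrix (Fin ℓ) (Fin ℓ) (Ap p))
    (q₀ : Fin ℓ → ZMod p) (s : ℤ) (j : Fin ℓ) (m : ℤ) :
    (B.mulVec (fun i => q₀ i • T s) j) m = ∑ i, q₀ i * B j i (m - s) := by
  rw [Matrix.mulVec, dotProduct, AddMonoidAlgebra.coeff_sum, Finset.sum_apply']
  refine Finset.sum_congr rfl fun i _ => ?_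
  rw [mul_smul_comm, AddMonoidAlgebra.coeff_smul_apply, smul_eq_mul]
  congr 1
  rw [show (T s : Ap p) = AddMonoidAlgebra.single s 1 from rfl,
    AddMonoidAlgebra.coeff_mul_single_apply, mul_one, sub_eq_add_neg]

/-- A square matrix over a field with nonzero determinant is surjective via `mulVec`. -/
lemma solve_det {ℓ : ℕ} {K : Type*} [Field K] (A : Matrix (Fin ℓ) (Fin ℓ) K)
    (hdet : A.det ≠ 0) (u : Fin ℓ → K) : ∃ q, A.mulVec q = u :=
  Matrix.mulVec_surjective_iff_isUnit.2
    ((Matrix.isUnit_iff_isUnit_det A).2 (isUnit_iff_ne_zero.2 hdet)) u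

end Aux

section Core

variable {p ℓ : ℕ} [Fact p.Prime]
variable (B : Matrix (Fin ℓ) (Fin ℓ) (Ap p)) (d e : Fin ℓ → ℤ)

/-- Phase 1: reduce the upper degrees below `d`. -/
lemma red1
    (hup : ∀ j i (m : ℤ), d j < m → B j i m = 0)
    (hLtri : ∀ j i, j < i → B j i (d j) = 0)
    (hLdiag : ∀ i, B i i (d i) ≠ 0) :
    ∀ n : ℕ, ∀ v : Fin ℓ → Ap p, (∀ i (m : ℤ), d i + n ≤ m → v i m = 0) →
      ∃ q w : Fin ℓ → Ap p, v = B.mulVec q + w ∧ ∀ i (m : ℤ), d i ≤ m → w i m = 0 := by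
  intro n
  induction n with
  | zero =>
    intro v hv
    exact ⟨0, v, by simp [Matrix.mulVec_zero], fun i m hm => hv i m (by simpa using hm)⟩
  | succ n ih =>
    intro v hv
    set L : Matrix (Fin ℓ) (Fin ℓ) (ZMod p) := fun j i => B j i (d j) with hL
    have hLdet : L.det ≠ 0 := by
      rw [Matrix.det_of_lowerTriangular L
        (fun i j (hij : OrderDual.toDual j < OrderDual.toDual i) => hLtri i j hij)]
      exact Finset.prod_ne_zero_iff.2 fun i _ => hLdiag i
    obtain ⟨q₀, hq₀⟩ := solve_det L hLdet (fun j => v j (d j + n))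
    set q₁ : Fin ℓ → Ap p := fun i => q₀ i • T (n : ℤ) with hq₁
    have hv' : ∀ i (m : ℤ), d i + n ≤ m → (v - B.mulVec q₁) i m = 0 := by
      intro j m hm
      have hcoeff : (B.mulVec q₁ j) m = ∑ i, q₀ i * B j i (m - n) :=
        mulVec_smul_T_coeff B q₀ n j m
      rw [Pi.sub_apply, AddMonoidAlgebra.coeff_sub, Finsupp.sub_apply, hcoeff]
      rcases eq_or_lt_of_le hm with heq | hlt
      · have hms : m - n = d j := by omega
        have : ∑ i, q₀ i * B j i (m - n) = L.mulVec q₀ j := by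
          rw [Matrix.mulVec, dotProduct]
          exact Finset.sum_congr rfl fun i _ => by rw [hms, mul_comm]
        rw [this, hq₀, ← heq]
        exact sub_self _
      · have h1 : v j m = 0 := hv j m (by push_cast; omega)
        have h2 : ∀ i, B j i (m - n) = 0 := fun i => hup j i _ (by omega)
        simp [h1, h2]
    obtain ⟨q, w, hqw, hw⟩ := ih (v - B.mulVec q₁) hv'
    refine ⟨q + q₁, w, ?_, hw⟩
    rw [Matrix.mulVec_add]
    have : v - B.mulVec q₁ = B.mulVec q + w := hqw
    have h3 : v = (B.mulVec q + w) + B.mulVec q₁ := by rw [← this]; abel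
    rw [h3]; abel

/-- Phase 2: raise the lower degrees to at least `e`, preserving the upper bound. -/
lemma red2
    (hup : ∀ j i (m : ℤ), d j < m → B j i m = 0)
    (hlo : ∀ j i (m : ℤ), m < e j → B j i m = 0)
    (hMtri : ∀ j i, i < j → B j i (e j) = 0)
    (hMdiag : ∀ i, B i i (e i) ≠ 0) :
    ∀ n : ℕ, ∀ v : Fin ℓ → Ap p,
      (∀ i (m : ℤ), d i ≤ m → v i m = 0) →
      (∀ i (m : ℤ), m < e i - n → v i m = 0) →
      ∃ q w : Fin ℓ → Ap p, v = B.mulVec q + w ∧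
        (∀ i (m : ℤ), d i ≤ m → w i m = 0) ∧ (∀ i (m : ℤ), m < e i → w i m = 0) := by
  intro n
  induction n with
  | zero =>
    intro v hvU hvL
    exact ⟨0, v, by simp [Matrix.mulVec_zero], hvU, fun i m hm => hvL i m (by simpa using hm)⟩
  | succ n ih =>
    intro v hvU hvL
    set M : Matrix (Fin ℓ) (Fin ℓ) (ZMod p) := fun j i => B j i (e j) with hM
    have hMdet : M.det ≠ 0 := by
      rw [Matrix.det_of_upperTriangular (fun i j (hij : j < i) => hMtri i j hij)]
      exact Finset.prod_ne_zero_iff.2 fun i _ => hMdiag i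
    obtain ⟨q₀, hq₀⟩ := solve_det M hMdet (fun j => v j (e j - (n + 1)))
    set q₁ : Fin ℓ → Ap p := fun i => q₀ i • T (-(n + 1) : ℤ) with hq₁
    have hcoeff : ∀ j (m : ℤ), (B.mulVec q₁ j) m = ∑ i, q₀ i * B j i (m + (n + 1)) := by
      intro j m
      have := mulVec_smul_T_coeff B q₀ (-(n + 1) : ℤ) j m
      rw [this]
      exact Finset.sum_congr rfl fun i _ => by rw [sub_neg_eq_add]
    have hv'U : ∀ i (m : ℤ), d i ≤ m → (v - B.mulVec q₁) i m = 0 := by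
      intro j m hm
      rw [Pi.sub_apply, AddMonoidAlgebra.coeff_sub, Finsupp.sub_apply, hcoeff]
      have h1 : v j m = 0 := hvU j m hm
      have h2 : ∀ i, B j i (m + (n + 1)) = 0 := fun i => hup j i _ (by omega)
      simp [h1, h2]
    have hv'L : ∀ i (m : ℤ), m < e i - n → (v - B.mulVec q₁) i m = 0 := by
      intro j m hm
      rw [Pi.sub_apply, AddMonoidAlgebra.coeff_sub, Finsupp.sub_apply, hcoeff]
      rcases eq_or_lt_of_le (show m ≤ e j - (n + 1) by omega) with heq | hlt
      · have hms : m + (n + 1) = e j := by omega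
        have : ∑ i, q₀ i * B j i (m + (n + 1)) = M.mulVec q₀ j := by
          rw [Matrix.mulVec, dotProduct]
          exact Finset.sum_congr rfl fun i _ => by rw [hms, mul_comm]
        rw [this, hq₀, heq]
        exact sub_self _
      · have h1 : v j m = 0 := hvL j m (by push_cast; omega)
        have h2 : ∀ i, B j i (m + (n + 1)) = 0 := fun i => hlo j i _ (by omega)
        simp [h1, h2]
    obtain ⟨q, w, hqw, hwU, hwL⟩ := ih (v - B.mulVec q₁) hv'U hv'L
    refine ⟨q + q₁, w, ?_, hwU, hwL⟩
    rw [Matrix.mulVec_add]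
    have h3 : v = (B.mulVec q + w) + B.mulVec q₁ := by rw [← hqw]; abel
    rw [h3]; abel

end Core

/-- Existence of a uniform upper bound for the supports of a finite family. -/
lemma exists_upper_bound {p ℓ : ℕ} (v : Fin ℓ → Ap p) (d : Fin ℓ → ℤ) :
    ∃ n : ℕ, ∀ i (m : ℤ), d i + n ≤ m → v i m = 0 := by
  refine ⟨(Finset.univ.sup fun i => ((v i).coeff.support.sup fun m => (m - d i).toNat)) + 1,
    fun i m hm => ?_⟩
  by_contra h0
  have hmem : m ∈ (v i).coeff.support := Finsupp.mem_support_iff.2 h0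
  have h1 : (m - d i).toNat ≤ Finset.univ.sup fun i => ((v i).coeff.support.sup fun m => (m - d i).toNat) :=
    le_trans (Finset.le_sup (f := fun m => (m - d i).toNat) hmem)
      (Finset.le_sup (f := fun i => ((v i).coeff.support.sup fun m => (m - d i).toNat)) (Finset.mem_univ i))
  have h2 : m - d i ≤ ((m - d i).toNat : ℤ) := Int.self_le_toNat _
  have h3 : ((m - d i).toNat : ℤ) ≤
      ((Finset.univ.sup fun i => ((v i).coeff.support.sup fun m => (m - d i).toNat) : ℕ) : ℤ) := by
    exact_mod_cast h1
  push_cast at hm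
  omega

/-- Existence of a uniform lower bound for the supports of a finite family. -/
lemma exists_lower_bound {p ℓ : ℕ} (v : Fin ℓ → Ap p) (e : Fin ℓ → ℤ) :
    ∃ n : ℕ, ∀ i (m : ℤ), m < e i - n → v i m = 0 := by
  refine ⟨Finset.univ.sup fun i => ((v i).coeff.support.sup fun m => (e i - m).toNat),
    fun i m hm => ?_⟩
  by_contra h0
  have hmem : m ∈ (v i).coeff.support := Finsupp.mem_support_iff.2 h0
  have h1 : (e i - m).toNat ≤ Finset.univ.sup fun i => ((v i).coeff.support.sup fun m => (e i - m).toNat) :=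
    le_trans (Finset.le_sup (f := fun m => (e i - m).toNat) hmem)
      (Finset.le_sup (f := fun i => ((v i).coeff.support.sup fun m => (e i - m).toNat)) (Finset.mem_univ i))
  have h2 : e i - m ≤ ((e i - m).toNat : ℤ) := Int.self_le_toNat _
  have h3 : ((e i - m).toNat : ℤ) ≤
      ((Finset.univ.sup fun i => ((v i).coeff.support.sup fun m => (e i - m).toNat) : ℕ) : ℤ) := by
    exact_mod_cast h1
  omega

/-- Let `B ∈ M_ℓ(R)` over `R = ℤ_p[t^±]` be Hermitian (`B = B†`, the
transpose composed with the involution `t ↦ t⁻¹`) with a dominant diagonal.  Then for any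
vector `v ∈ R^ℓ` there exist `q, w ∈ R^ℓ` with `v = B q + w` and `δ w_i <₊ δ B_{ii}` for all
`i` (division with remainder). -/
theorem stmt18 (p : ℕ) (hp : p.Prime) (ℓ : ℕ)
    (B : Matrix (Fin ℓ) (Fin ℓ) (Ap p))
    (hherm : ∀ i j, B i j = invert (B j i))
    (hdd : DominantDiagonal B)
    (v : Fin ℓ → Ap p) :
    ∃ q w : Fin ℓ → Ap p, v = B.mulVec q + w ∧ ∀ i, LtPlus (w i) (B i i) := by
  haveI : Fact p.Prime := ⟨hp⟩
  obtain ⟨h0, hP, hM⟩ := hdd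
  have hne : ∀ i, (B i i).coeff.support.Nonempty := fun i =>
    Finsupp.support_nonempty_iff.2 (fun h => h0 i (AddMonoidAlgebra.coeff_inj.1 (by rw [h]; rfl)))
  set d : Fin ℓ → ℤ := fun i => (B i i).coeff.support.max' (hne i) with hd_def
  set e : Fin ℓ → ℤ := fun i => (B i i).coeff.support.min' (hne i) with he_def
  have hd : ∀ i, degp (B i i) = (d i : WithBot ℤ) := fun i =>
    (Finset.coe_max' (hne i)).symm
  have he : ∀ i, degm (B i i) = (e i : WithTop ℤ) := fun i =>
    (Finset.coe_min' (hne i)).symm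
  -- all entries of row j are bounded above by d j and below by e j
  have hup : ∀ j i (m : ℤ), d j < m → B j i m = 0 := by
    intro j i m hm
    rcases lt_trichotomy j i with h | h | h
    · exact coeff_zero_of_degp_le (le_of_lt ((hd j) ▸ (hP j i h).1)) hm
    · subst h; exact coeff_zero_of_degp_le (le_of_eq (hd j)) hm
    · exact coeff_zero_of_degp_le ((hd j) ▸ (hM j i h).1) hm
  have hlo : ∀ j i (m : ℤ), m < e j → B j i m = 0 := by
    intro j i m hm
    rcases lt_trichotomy j i with h | h | h
    · exact coeff_zero_of_le_degm ((he j) ▸ (hP j i h).2) hm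
    · subst h; exact coeff_zero_of_le_degm (le_of_eq (he j).symm) hm
    · exact coeff_zero_of_le_degm (le_of_lt ((he j) ▸ (hM j i h).2)) hm
  have hLtri : ∀ j i, j < i → B j i (d j) = 0 := fun j i h =>
    coeff_zero_of_degp_lt ((hd j) ▸ (hP j i h).1) le_rfl
  have hMtri : ∀ j i, i < j → B j i (e j) = 0 := fun j i h =>
    coeff_zero_of_lt_degm ((he j) ▸ (hM j i h).2) le_rfl
  have hLdiag : ∀ i, B i i (d i) ≠ 0 := fun i =>
    Finsupp.mem_support_iff.1 (Finset.max'_mem _ (hne i))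
  have hMdiag : ∀ i, B i i (e i) ≠ 0 := fun i =>
    Finsupp.mem_support_iff.1 (Finset.min'_mem _ (hne i))
  -- phase 1
  obtain ⟨n₁, hn₁⟩ := exists_upper_bound v d
  obtain ⟨q₁, w₁, h1, hw1⟩ := red1 B d hup hLtri hLdiag n₁ v hn₁
  -- phase 2
  obtain ⟨n₂, hn₂⟩ := exists_lower_bound w₁ e
  obtain ⟨q₂, w, h2, hwU, hwL⟩ := red2 B d e hup hlo hMtri hMdiag n₂ w₁ hw1 hn₂
  refine ⟨q₁ + q₂, w, ?_, fun i => ?_⟩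
  · rw [Matrix.mulVec_add, h1, h2]; abel
  · constructor
    · rw [hd i]
      exact degp_lt_of_coeff (hwU i)
    · rw [he i]
      exact le_degm_of_coeff (hwL i)

end Stmt18
end
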